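/- arXiv:1002.0606 — 4 statements merged into one kernel-verified Lean document; each statement's English description precedes it below -/
import Mathlib

section
/- Let θ₀, θ_R, θ₀', θ_R' ∈ S_{2π} and z ∈ ℂ \ σ(H_{θ₀,θ_R}), and let ψ₁(z,·), ψ₂(z,·) be any basis of the solution space of −u'' + V u = z u on [0,R]. Then the 2×2 matrix with columns γ_{θ₀,θ_R}(ψ₁(z,·)) and γ_{θ₀,θ_R}(ψ₂(z,·)) is invertible, and Λ_{θ₀,θ_R}^{θ₀',θ_R'}(z) = [γ_{θ₀',θ_R'}(ψ₁(z,·)) γ_{θ₀',θ_R'}(ψ₂(z,·))] · [γ_{θ₀,θ_R}(ψ₁(z,·)) γ_{θ₀,θ_R}(ψ₂(z,·))]⁻¹. In particular, the right-hand side is independent of the choice of basis ψ₁, ψ₂. -/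
open MeasureTheory Set Complex Filter Matrix
open scoped Classical

noncomputable section

/-- The strip `S_{2π} = {z ∈ ℂ | 0 ≤ Re z < 2π}`. -/
def S2pi : Set ℂ := {z : ℂ | 0 ≤ z.re ∧ z.re < 2 * Real.pi}

/-- `u` (with derivative `u'`) solves the inhomogeneous Schrödinger equation
`-u'' + V u - z u = f` on `[0,R]`: `u` is differentiable with derivative `u'`
on `[0,R]`, and `u'` is absolutely continuous with `u'' = (V - z) u - f` (a.e.),
encoded in integrated form. -/
def IsSolInhom (R : ℝ) (V : ℝ → ℂ) (z : ℂ) (f u u' : ℝ → ℂ) : Prop :=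
  (∀ x ∈ Icc (0:ℝ) R, HasDerivAt u (u' x) x) ∧
  (∀ x ∈ Icc (0:ℝ) R, u' x = u' 0 + ∫ t in (0:ℝ)..x, ((V t - z) * u t - f t))

/-- `u` (with derivative `u'`) solves the homogeneous equation `-u'' + V u = z u`
on `[0,R]`. -/
def IsSol (R : ℝ) (V : ℝ → ℂ) (z : ℂ) (u u' : ℝ → ℂ) : Prop :=
  IsSolInhom R V z 0 u u'

/-- The boundary trace map `γ_{θ₀,θ_R}(u) ∈ ℂ²`. -/
def bTrace (R : ℝ) (θ0 θR : ℂ) (u u' : ℝ → ℂ) : Fin 2 → ℂ :=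
  ![Complex.cos θ0 * u 0 + Complex.sin θ0 * u' 0,
    Complex.cos θR * u R - Complex.sin θR * u' R]

/-- `z` is an eigenvalue of the Schrödinger operator `H_{θ₀,θ_R}` in `L²((0,R))`.
Since `H_{θ₀,θ_R}` has purely discrete spectrum, the spectrum `σ(H_{θ₀,θ_R})`
coincides with the set of its eigenvalues. -/
def IsEigenvalue (R : ℝ) (V : ℝ → ℂ) (θ0 θR z : ℂ) : Prop :=
  ∃ u u' : ℝ → ℂ, IsSol R V z u u' ∧ bTrace R θ0 θR u u' = 0 ∧
    ∃ x ∈ Icc (0:ℝ) R, u x ≠ 0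

/-- The boundary data map `Λ_{θ₀,θ_R}^{θ₀',θ_R'}(z) : ℂ² → ℂ²`: it sends the
`(θ₀,θ_R)`-boundary data of a solution of `-u'' + V u = z u` to its
`(θ₀',θ_R')`-boundary data.  (It is defined via a choice of solution; for
`z ∉ σ(H_{θ₀,θ_R})` the solution exists and is unique, so the map is well
defined there.) -/
def lambdaMap (R : ℝ) (V : ℝ → ℂ) (θ0 θR θ0' θR' z : ℂ) (c : Fin 2 → ℂ) :
    Fin 2 → ℂ :=
  if h : ∃ u : (ℝ → ℂ) × (ℝ → ℂ), IsSol R V z u.1 u.2 ∧ bTrace R θ0 θR u.1 u.2 = c then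
    bTrace R θ0' θR' h.choose.1 h.choose.2
  else 0

/-- The boundary data map `Λ_{θ₀,θ_R}^{θ₀',θ_R'}(z)` as a `2 × 2` complex matrix. -/
def lambdaMat (R : ℝ) (V : ℝ → ℂ) (θ0 θR θ0' θR' z : ℂ) :
    Matrix (Fin 2) (Fin 2) ℂ :=
  Matrix.of fun i j => lambdaMap R V θ0 θR θ0' θR' z (Pi.single j 1) i

/-- The diagonal matrix `S_{α,β} = diag(sin α, sin β)`. -/
def Smat (α β : ℂ) : Matrix (Fin 2) (Fin 2) ℂ :=
  Matrix.diagonal ![Complex.sin α, Complex.sin β]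

end

noncomputable section

/-- The `2 × 2` matrix `[γ_{θ₀,θ_R}(ψ₁)  γ_{θ₀,θ_R}(ψ₂)]` whose columns are the
`(θ₀,θ_R)`-boundary traces of `ψ₁` and `ψ₂`. -/
def bMat (R : ℝ) (θ0 θR : ℂ) (ψ1 ψ1' ψ2 ψ2' : ℝ → ℂ) : Matrix (Fin 2) (Fin 2) ℂ :=
  Matrix.of fun i j =>
    if j = (0 : Fin 2) then bTrace R θ0 θR ψ1 ψ1' i else bTrace R θ0 θR ψ2 ψ2' i

end

section Aux

open MeasureTheory Set Matrix intervalIntegral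

variable {R : ℝ} {V : ℝ → ℂ} {z : ℂ}

lemma IsSol.continuousOn {u u' : ℝ → ℂ} (h : IsSol R V z u u') :
    ContinuousOn u (Icc 0 R) := fun x hx =>
  (h.1 x hx).continuousAt.continuousWithinAt

lemma aux_intervalIntegrable (hV : IntegrableOn V (Ioo 0 R))
    {u : ℝ → ℂ} (hu : ContinuousOn u (Icc 0 R)) {x : ℝ} (hx : x ∈ Icc (0:ℝ) R) :
    IntervalIntegrable (fun t => (V t - z) * u t) volume 0 x := by
  rw [intervalIntegrable_iff_integrableOn_Ioc_of_le hx.1,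
      integrableOn_Ioc_iff_integrableOn_Ioo]
  have hsub : Ioo (0:ℝ) x ⊆ Ioo 0 R := Ioo_subset_Ioo le_rfl hx.2
  have h1 : IntegrableOn (fun t => V t - z) (Ioo 0 R) :=
    hV.sub (integrableOn_const measure_Ioo_lt_top.ne)
  obtain ⟨C, hC⟩ := isCompact_Icc.exists_bound_of_continuousOn hu
  have hmeas : AEStronglyMeasurable u (volume.restrict (Ioo 0 R)) :=
    (hu.aestronglyMeasurable measurableSet_Icc).mono_measure
      (Measure.restrict_mono Ioo_subset_Icc_self le_rfl)
  have hb : ∀ᵐ t ∂(volume.restrict (Ioo 0 R)), ‖u t‖ ≤ C :=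
    (ae_restrict_iff' measurableSet_Ioo).2
      (ae_of_all _ fun t ht => hC t (Ioo_subset_Icc_self ht))
  have hint : Integrable (fun t => u t * (V t - z)) (volume.restrict (Ioo 0 R)) :=
    h1.bdd_mul hmeas hb
  have hint2 : IntegrableOn (fun t => (V t - z) * u t) (Ioo 0 R) :=
    hint.congr (ae_of_all _ fun t => mul_comm _ _)
  exact hint2.mono_set hsub

lemma IsSol.combo (hR : 0 < R) (hV : IntegrableOn V (Ioo 0 R))
    {u u' v v' : ℝ → ℂ} (hu : IsSol R V z u u') (hv : IsSol R V z v v') (a b : ℂ) :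
    IsSol R V z (fun x => a * u x + b * v x) (fun x => a * u' x + b * v' x) := by
  constructor
  · intro x hx
    exact ((hu.1 x hx).const_mul a).add ((hv.1 x hx).const_mul b)
  · intro x hx
    have hiu := aux_intervalIntegrable (z := z) hV hu.continuousOn hx
    have hiv := aux_intervalIntegrable (z := z) hV hv.continuousOn hx
    have e1 := hu.2 x hx
    have e2 := hv.2 x hx
    have key : (∫ t in (0:ℝ)..x, ((V t - z) * (a * u t + b * v t) - (0:ℝ→ℂ) t))
        = a * (∫ t in (0:ℝ)..x, ((V t - z) * u t - (0:ℝ→ℂ) t))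
          + b * (∫ t in (0:ℝ)..x, ((V t - z) * v t - (0:ℝ→ℂ) t)) := by
      simp only [Pi.zero_apply, sub_zero]
      rw [← intervalIntegral.integral_const_mul, ← intervalIntegral.integral_const_mul,
          ← intervalIntegral.integral_add (hiu.const_mul a) (hiv.const_mul b)]
      congr 1; funext t; ring
    rw [key]; simp only [e1, e2]; ring

lemma IsSol.deriv_zero (hR : 0 < R) {u u' : ℝ → ℂ} (h : IsSol R V z u u')
    (hvan : ∀ x ∈ Icc (0:ℝ) R, u x = 0) : u' 0 = 0 ∧ u' R = 0 := by
  have hud := uniqueDiffOn_Icc hR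
  have gen : ∀ x ∈ Icc (0:ℝ) R, u' x = 0 := by
    intro x hx
    have h1 : HasDerivWithinAt u (u' x) (Icc 0 R) x := (h.1 x hx).hasDerivWithinAt
    have h2 : HasDerivWithinAt u 0 (Icc 0 R) x :=
      (hasDerivWithinAt_const x (Icc 0 R) (0:ℂ)).congr (fun y hy => hvan y hy) (hvan x hx)
    rw [← h1.derivWithin (hud x hx), h2.derivWithin (hud x hx)]
  exact ⟨gen 0 ⟨le_rfl, hR.le⟩, gen R ⟨hR.le, le_rfl⟩⟩

lemma bTrace_combo (R : ℝ) (θ0 θR : ℂ) (ψ1 ψ1' ψ2 ψ2' : ℝ → ℂ) (c : Fin 2 → ℂ) :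
    bTrace R θ0 θR (fun x => c 0 * ψ1 x + c 1 * ψ2 x) (fun x => c 0 * ψ1' x + c 1 * ψ2' x)
      = (bMat R θ0 θR ψ1 ψ1' ψ2 ψ2').mulVec c := by
  funext i
  fin_cases i <;>
    simp [bTrace, bMat, Matrix.mulVec, dotProduct, Fin.sum_univ_two] <;> ring

lemma trace_unique (hR : 0 < R) (hV : IntegrableOn V (Ioo 0 R)) {θ0 θR : ℂ}
    (hz : ¬ IsEigenvalue R V θ0 θR z)
    {u u' v v' : ℝ → ℂ} (hu : IsSol R V z u u') (hv : IsSol R V z v v')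
    (ht : bTrace R θ0 θR u u' = bTrace R θ0 θR v v') :
    u 0 = v 0 ∧ u' 0 = v' 0 ∧ u R = v R ∧ u' R = v' R := by
  have hw : IsSol R V z (fun x => (1:ℂ) * u x + (-1) * v x)
      (fun x => (1:ℂ) * u' x + (-1) * v' x) := hu.combo hR hV hv 1 (-1)
  have htr : bTrace R θ0 θR (fun x => (1:ℂ) * u x + (-1) * v x)
      (fun x => (1:ℂ) * u' x + (-1) * v' x) = 0 := by
    funext i
    have h1 := congrFun ht i
    fin_cases i <;> simp [bTrace] at h1 ⊢ <;> linear_combination h1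
  have hvan : ∀ x ∈ Icc (0:ℝ) R, (1:ℂ) * u x + (-1) * v x = 0 := by
    by_contra hcon
    push_neg at hcon
    obtain ⟨x, hx, hne⟩ := hcon
    exact hz ⟨_, _, hw, htr, x, hx, hne⟩
  obtain ⟨hd0, hdR⟩ := hw.deriv_zero hR hvan
  have h0 := hvan 0 ⟨le_rfl, hR.le⟩
  have hRv := hvan R ⟨hR.le, le_rfl⟩
  refine ⟨by linear_combination h0, by linear_combination hd0,
    by linear_combination hRv, by linear_combination hdR⟩

end Aux

/-- Let `θ₀, θ_R, θ₀', θ_R' ∈ S_{2π}`, `z ∈ ℂ \ σ(H_{θ₀,θ_R})`, and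
let `ψ₁, ψ₂` be any basis of the solution space of `-u'' + V u = z u` on `[0,R]`
(i.e. two solutions with nonvanishing Wronskian).  Then the matrix
`[γ_{θ₀,θ_R}(ψ₁)  γ_{θ₀,θ_R}(ψ₂)]` is invertible and
`Λ_{θ₀,θ_R}^{θ₀',θ_R'}(z) = [γ_{θ₀',θ_R'}(ψ₁)  γ_{θ₀',θ_R'}(ψ₂)] ·
[γ_{θ₀,θ_R}(ψ₁)  γ_{θ₀,θ_R}(ψ₂)]⁻¹`; in particular the right-hand side does not
depend on the choice of the basis `ψ₁, ψ₂`. -/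
theorem lambda_eq_trace_matrices
    (R : ℝ) (hR : 0 < R) (V : ℝ → ℂ) (hV : IntegrableOn V (Ioo 0 R))
    (θ0 θR θ0' θR' : ℂ) (hθ0 : θ0 ∈ S2pi) (hθR : θR ∈ S2pi)
    (hθ0' : θ0' ∈ S2pi) (hθR' : θR' ∈ S2pi)
    (z : ℂ) (hz : ¬ IsEigenvalue R V θ0 θR z)
    (ψ1 ψ1' ψ2 ψ2' : ℝ → ℂ)
    (hψ1 : IsSol R V z ψ1 ψ1') (hψ2 : IsSol R V z ψ2 ψ2')
    (hW : ψ1 0 * ψ2' 0 - ψ1' 0 * ψ2 0 ≠ 0) :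
    IsUnit (bMat R θ0 θR ψ1 ψ1' ψ2 ψ2') ∧
    lambdaMat R V θ0 θR θ0' θR' z =
      bMat R θ0' θR' ψ1 ψ1' ψ2 ψ2' * (bMat R θ0 θR ψ1 ψ1' ψ2 ψ2')⁻¹ := by
  classical
  set B := bMat R θ0 θR ψ1 ψ1' ψ2 ψ2' with hBdef
  set B' := bMat R θ0' θR' ψ1 ψ1' ψ2 ψ2' with hB'def
  have hdet : B.det ≠ 0 := by
    intro hdet
    obtain ⟨c, hc0, hc⟩ := (Matrix.exists_mulVec_eq_zero_iff).2 hdet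
    have hsol := hψ1.combo hR hV hψ2 (c 0) (c 1)
    have htr : bTrace R θ0 θR (fun x => c 0 * ψ1 x + c 1 * ψ2 x)
        (fun x => c 0 * ψ1' x + c 1 * ψ2' x) = 0 := by
      rw [bTrace_combo]; exact hc
    have hvan : ∀ x ∈ Icc (0:ℝ) R, c 0 * ψ1 x + c 1 * ψ2 x = 0 := by
      by_contra hcon
      push_neg at hcon
      obtain ⟨x, hx, hne⟩ := hcon
      exact hz ⟨_, _, hsol, htr, x, hx, hne⟩
    have e1 : c 0 * ψ1 0 + c 1 * ψ2 0 = 0 := hvan 0 ⟨le_rfl, hR.le⟩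
    have e2 : c 0 * ψ1' 0 + c 1 * ψ2' 0 = 0 := (hsol.deriv_zero hR hvan).1
    have hc00 : c 0 = 0 := by
      have h : c 0 * (ψ1 0 * ψ2' 0 - ψ1' 0 * ψ2 0) = 0 := by
        linear_combination ψ2' 0 * e1 - ψ2 0 * e2
      exact (mul_eq_zero.1 h).resolve_right hW
    have hc10 : c 1 = 0 := by
      have h : c 1 * (ψ1 0 * ψ2' 0 - ψ1' 0 * ψ2 0) = 0 := by
        linear_combination ψ1 0 * e2 - ψ1' 0 * e1
      exact (mul_eq_zero.1 h).resolve_right hW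
    apply hc0
    funext i
    fin_cases i <;> simpa using (by assumption : _)
  have hBB : B * B⁻¹ = 1 := Matrix.mul_nonsing_inv B (isUnit_iff_ne_zero.2 hdet)
  refine ⟨(Matrix.isUnit_iff_isUnit_det B).2 (isUnit_iff_ne_zero.2 hdet), ?_⟩
  ext i j
  set e : Fin 2 → ℂ := Pi.single j 1 with he
  set d : Fin 2 → ℂ := B⁻¹.mulVec e with hd
  have hsolj := hψ1.combo hR hV hψ2 (d 0) (d 1)
  have htrj : bTrace R θ0 θR (fun x => d 0 * ψ1 x + d 1 * ψ2 x)
      (fun x => d 0 * ψ1' x + d 1 * ψ2' x) = e := by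
    rw [bTrace_combo, hd, Matrix.mulVec_mulVec, hBB, Matrix.one_mulVec]
  have hex : ∃ u : (ℝ → ℂ) × (ℝ → ℂ), IsSol R V z u.1 u.2 ∧ bTrace R θ0 θR u.1 u.2 = e :=
    ⟨(fun x => d 0 * ψ1 x + d 1 * ψ2 x, fun x => d 0 * ψ1' x + d 1 * ψ2' x), hsolj, htrj⟩
  have hspec := hex.choose_spec
  obtain ⟨q0, q0', qR, qR'⟩ := trace_unique hR hV hz hspec.1 hsolj (hspec.2.trans htrj.symm)
  have hL : lambdaMat R V θ0 θR θ0' θR' z i j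
      = bTrace R θ0' θR' hex.choose.1 hex.choose.2 i := by
    simp only [lambdaMat, lambdaMap, Matrix.of_apply, ← he, dif_pos hex]
  rw [hL]
  have hcongr : bTrace R θ0' θR' hex.choose.1 hex.choose.2
      = bTrace R θ0' θR' (fun x => d 0 * ψ1 x + d 1 * ψ2 x)
          (fun x => d 0 * ψ1' x + d 1 * ψ2' x) := by
    generalize hex.choose = w at q0 q0' qR qR' ⊢
    simp [bTrace, q0, q0', qR, qR']
  rw [hcongr, bTrace_combo, hd, Matrix.mulVec_mulVec]
  have : ((B' * B⁻¹).mulVec e) i = (B' * B⁻¹) i j := by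
    simp [he, Matrix.mulVec_single]
  exact this
end

section
/- Let θ₀, θ_R, θ₀', θ_R' ∈ S_{2π} and z ∈ ℂ \ (σ(H_{θ₀,θ_R}) ∪ σ(H_{θ₀',θ_R'})). Then the 2×2 matrix Λ_{θ₀,θ_R}^{θ₀',θ_R'}(z) is invertible and its inverse is Λ_{θ₀',θ_R'}^{θ₀,θ_R}(z). -/
open MeasureTheory Set Complex Filter Matrix
open scoped Classical

namespace BDMaux

open scoped Interval


lemma II_kernel {h : ℝ → ℂ} (hh : Integrable h volume) (c a b : ℝ) :
    IntervalIntegrable (fun t => ((c - t : ℝ) : ℂ) * h t) volume a b :=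
  (hh.intervalIntegrable).continuousOn_mul
    (Complex.continuous_ofReal.comp (continuous_const.sub continuous_id)).continuousOn

/-- derivative of the Volterra kernel integral, valid at every point for `h ∈ L¹`. -/
lemma hasDerivAt_kernel {h : ℝ → ℂ} (hh : Integrable h volume) (x : ℝ) :
    HasDerivAt (fun y => ∫ t in (0:ℝ)..y, ((y - t : ℝ) : ℂ) * h t)
      (∫ t in (0:ℝ)..x, h t) x := by
  rw [hasDerivAt_iff_isLittleO]
  have key : ∀ y : ℝ, (∫ t in (0:ℝ)..y, ((y - t : ℝ) : ℂ) * h t)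
      - (∫ t in (0:ℝ)..x, ((x - t : ℝ) : ℂ) * h t)
      - (y - x) • (∫ t in (0:ℝ)..x, h t) = ∫ t in x..y, ((y - t : ℝ) : ℂ) * h t := by
    intro y
    have hsplit : (∫ t in (0:ℝ)..y, ((y - t : ℝ) : ℂ) * h t)
        = (∫ t in (0:ℝ)..x, ((y - t : ℝ) : ℂ) * h t) + ∫ t in x..y, ((y - t : ℝ) : ℂ) * h t :=
      (intervalIntegral.integral_add_adjacent_intervals (II_kernel hh y 0 x)
        (II_kernel hh y x y)).symm
    have heq : (fun t => ((y - t : ℝ) : ℂ) * h t)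
        = fun t => ((x - t : ℝ) : ℂ) * h t + ((y - x : ℝ) : ℂ) * h t := by
      funext t; push_cast; ring
    have hadd : (∫ t in (0:ℝ)..x, ((y - t : ℝ) : ℂ) * h t)
        = (∫ t in (0:ℝ)..x, ((x - t : ℝ) : ℂ) * h t)
          + ∫ t in (0:ℝ)..x, ((y - x : ℝ) : ℂ) * h t := by
      rw [heq]
      exact intervalIntegral.integral_add (II_kernel hh x 0 x)
        (((hh.intervalIntegrable)).const_mul _)
    have hconst : (∫ t in (0:ℝ)..x, ((y - x : ℝ) : ℂ) * h t)
        = ((y - x : ℝ) : ℂ) * ∫ t in (0:ℝ)..x, h t :=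
      intervalIntegral.integral_const_mul _ _
    rw [hsplit, hadd, hconst]
    simp only [Complex.real_smul]
    push_cast
    ring
  rw [Asymptotics.isLittleO_iff]
  intro c hc
  have hcont : Continuous fun y => ∫ t in x..y, ‖h t‖ := hh.norm.continuous_primitive x
  have htend : Tendsto (fun y => |∫ t in x..y, ‖h t‖|) (nhds x) (nhds 0) := by
    have := (continuous_abs.comp hcont).tendsto x
    simpa [Function.comp_def] using this
  have hev : ∀ᶠ y in nhds x, |∫ t in x..y, ‖h t‖| ≤ c := htend (Iic_mem_nhds hc)
  filter_upwards [hev] with y hy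
  rw [key y]
  have hb1 : ‖∫ t in x..y, ((y - t : ℝ) : ℂ) * h t‖ ≤ |∫ t in x..y, ‖((y - t : ℝ) : ℂ) * h t‖| :=
    intervalIntegral.norm_integral_le_abs_integral_norm
  have hptb : ∀ t ∈ Icc (min x y) (max x y), ‖((y - t : ℝ) : ℂ) * h t‖ ≤ |y - x| * ‖h t‖ := by
    intro t ht
    rw [norm_mul, Complex.norm_real, Real.norm_eq_abs]
    apply mul_le_mul_of_nonneg_right _ (norm_nonneg _)
    rcases le_total x y with hxy | hxy
    · rw [min_eq_left hxy, max_eq_right hxy] at ht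
      rw [_root_.abs_of_nonneg (by linarith [ht.2]), _root_.abs_of_nonneg (by linarith)]
      linarith [ht.1]
    · rw [min_eq_right hxy, max_eq_left hxy] at ht
      rw [_root_.abs_of_nonpos (by linarith [ht.1]), _root_.abs_of_nonpos (by linarith)]
      linarith [ht.2]
  have hb2 : |∫ t in x..y, ‖((y - t : ℝ) : ℂ) * h t‖| ≤ |y - x| * |∫ t in x..y, ‖h t‖| := by
    rcases le_total x y with hxy | hxy
    · rw [_root_.abs_of_nonneg (intervalIntegral.integral_nonneg hxy fun t _ => norm_nonneg _),
        _root_.abs_of_nonneg (intervalIntegral.integral_nonneg hxy fun t _ => norm_nonneg _)]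
      calc (∫ t in x..y, ‖((y - t : ℝ) : ℂ) * h t‖)
          ≤ ∫ t in x..y, |y - x| * ‖h t‖ := by
            apply intervalIntegral.integral_mono_on hxy ((II_kernel hh y x y).norm)
              ((hh.norm.intervalIntegrable).const_mul _)
            intro t ht
            exact hptb t (by rwa [min_eq_left hxy, max_eq_right hxy])
        _ = |y - x| * ∫ t in x..y, ‖h t‖ := intervalIntegral.integral_const_mul _ _
    · have e1 : |∫ t in x..y, ‖((y - t : ℝ) : ℂ) * h t‖| = ∫ t in y..x, ‖((y - t : ℝ) : ℂ) * h t‖ := by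
        rw [intervalIntegral.integral_symm y x, abs_neg,
          _root_.abs_of_nonneg (intervalIntegral.integral_nonneg hxy fun t _ => norm_nonneg _)]
      have e2 : |∫ t in x..y, ‖h t‖| = ∫ t in y..x, ‖h t‖ := by
        rw [intervalIntegral.integral_symm y x, abs_neg,
          _root_.abs_of_nonneg (intervalIntegral.integral_nonneg hxy fun t _ => norm_nonneg _)]
      rw [e1, e2]
      calc (∫ t in y..x, ‖((y - t : ℝ) : ℂ) * h t‖)
          ≤ ∫ t in y..x, |y - x| * ‖h t‖ := by
            apply intervalIntegral.integral_mono_on hxy ((II_kernel hh y y x).norm)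
              ((hh.norm.intervalIntegrable).const_mul _)
            intro t ht
            exact hptb t (by rwa [min_eq_right hxy, max_eq_left hxy])
        _ = |y - x| * ∫ t in y..x, ‖h t‖ := intervalIntegral.integral_const_mul _ _
  calc ‖∫ t in x..y, ((y - t : ℝ) : ℂ) * h t‖ ≤ |y - x| * |∫ t in x..y, ‖h t‖| := hb1.trans hb2
    _ ≤ |y - x| * c := mul_le_mul_of_nonneg_left hy (abs_nonneg _)
    _ = c * ‖y - x‖ := by rw [Real.norm_eq_abs]; ring



lemma abs_primitive_le {w : ℝ → ℝ} (hw : Integrable w volume) (t : ℝ) :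
    |∫ s in (0:ℝ)..t, w s| ≤ ∫ s, |w s| := by
  have h1 : ‖∫ s in (0:ℝ)..t, w s‖ ≤ ∫ s in Ι (0:ℝ) t, ‖w s‖ :=
    intervalIntegral.norm_integral_le_integral_norm_uIoc
  rw [Real.norm_eq_abs] at h1
  refine h1.trans ?_
  simp only [Real.norm_eq_abs]
  exact setIntegral_le_integral hw.abs (Eventually.of_forall fun s => abs_nonneg _)

lemma exp_sub_exp_le {p q M : ℝ} (hp : |p| ≤ M) (hq : |q| ≤ M) :
    |Real.exp p - Real.exp q| ≤ Real.exp M * |p - q| := by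
  have key : ∀ a b : ℝ, |a| ≤ M → |b| ≤ M → b ≤ a →
      Real.exp a - Real.exp b ≤ Real.exp M * |a - b| := by
    intro a b ha hb hba
    have h1 : Real.exp a - Real.exp b = Real.exp b * (Real.exp (a - b) - 1) := by
      rw [mul_sub, mul_one, ← Real.exp_add]; ring_nf
    have hid : Real.exp (-(a - b)) * Real.exp (a - b) = 1 := by
      rw [← Real.exp_add]; simp
    have h2 : Real.exp (a - b) - 1 ≤ (a - b) * Real.exp (a - b) := by
      nlinarith [Real.add_one_le_exp (-(a - b)), Real.exp_pos (a - b), sub_nonneg.2 hba, hid]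
    have hba2 : Real.exp b * Real.exp (a - b) = Real.exp a := by
      rw [← Real.exp_add]; congr 1; ring
    have h3 : Real.exp b * ((a - b) * Real.exp (a - b)) = (a - b) * Real.exp a := by
      rw [← hba2]; ring
    have h4 : Real.exp a ≤ Real.exp M := Real.exp_le_exp.2 (le_of_abs_le ha)
    rw [h1, _root_.abs_of_nonneg (sub_nonneg.2 hba)]
    calc Real.exp b * (Real.exp (a - b) - 1) ≤ Real.exp b * ((a - b) * Real.exp (a - b)) := by
          apply mul_le_mul_of_nonneg_left h2 (Real.exp_pos b).le
      _ = (a - b) * Real.exp a := h3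
      _ ≤ Real.exp M * (a - b) := by nlinarith [sub_nonneg.2 hba]
  rcases le_total q p with h | h
  · rw [_root_.abs_of_nonneg (sub_nonneg.2 (Real.exp_le_exp.2 h))]
    exact key p q hp hq h
  · rw [_root_.abs_of_nonpos (sub_nonpos.2 (Real.exp_le_exp.2 h)), neg_sub, ← abs_sub_comm]
    exact key q p hq hp h

lemma exp_primitive_eq_cont {w : ℝ → ℝ} (hw : Integrable w volume) (hc : Continuous w) (x : ℝ) :
    ∫ t in (0:ℝ)..x, w t * Real.exp (∫ s in (0:ℝ)..t, w s)
      = Real.exp (∫ s in (0:ℝ)..x, w s) - 1 := by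
  set m : ℝ → ℝ := fun u => ∫ s in (0:ℝ)..u, w s with hm_def
  have hm : ∀ t : ℝ, HasDerivAt m (w t) t := fun t =>
    intervalIntegral.integral_hasDerivAt_right (hw.intervalIntegrable)
      ⟨univ, univ_mem, hc.aestronglyMeasurable.restrict⟩ hc.continuousAt
  have hmc : Continuous m := hw.continuous_primitive 0
  have hG : ∀ t ∈ uIcc (0:ℝ) x, HasDerivAt (fun u => Real.exp (m u)) (Real.exp (m t) * w t) t :=
    fun t _ => (hm t).exp
  have hint : IntervalIntegrable (fun t => Real.exp (m t) * w t) volume 0 x :=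
    ((Real.continuous_exp.comp hmc).mul hc).intervalIntegrable 0 x
  have h1 := intervalIntegral.integral_eq_sub_of_hasDerivAt hG hint
  have h2 : (∫ t in (0:ℝ)..x, w t * Real.exp (m t)) = ∫ t in (0:ℝ)..x, Real.exp (m t) * w t :=
    intervalIntegral.integral_congr fun t _ => mul_comm _ _
  have hm0 : m 0 = 0 := intervalIntegral.integral_same
  rw [h2, h1, hm0, Real.exp_zero]

lemma exp_primitive_eq {w : ℝ → ℝ} (hw : Integrable w volume) (x : ℝ) :
    ∫ t in (0:ℝ)..x, w t * Real.exp (∫ s in (0:ℝ)..t, w s)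
      = Real.exp (∫ s in (0:ℝ)..x, w s) - 1 := by
  set A : ℝ := ∫ s, |w s| with hA_def
  have hA0 : 0 ≤ A := integral_nonneg fun s => abs_nonneg _
  set L : ℝ := ∫ t in (0:ℝ)..x, w t * Real.exp (∫ s in (0:ℝ)..t, w s) with hL_def
  set Rr : ℝ := Real.exp (∫ s in (0:ℝ)..x, w s) - 1 with hR_def
  set C : ℝ := Real.exp A + Real.exp (A+1) * (A + 1) + Real.exp (A+1) with hC_def
  have hCpos : 0 < C := by positivity
  have main : ∀ δ : ℝ, 0 < δ → δ ≤ 1 → |L - Rr| ≤ C * δ := by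
    intro δ hδ hδ1
    obtain ⟨g, -, hclose, gcont, gint⟩ := hw.exists_hasCompactSupport_integral_sub_le hδ
    have hwg : Integrable (fun t => w t - g t) volume := hw.sub gint
    set mw : ℝ → ℝ := fun u => ∫ s in (0:ℝ)..u, w s with hmw
    set mg : ℝ → ℝ := fun u => ∫ s in (0:ℝ)..u, g s with hmg
    have hdiffm : ∀ t, |mw t - mg t| ≤ δ := by
      intro t
      have : mw t - mg t = ∫ s in (0:ℝ)..t, (w s - g s) :=
        (intervalIntegral.integral_sub (hw.intervalIntegrable) (gint.intervalIntegrable)).symm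
      rw [this]
      refine (abs_primitive_le (hw.sub gint) t).trans ?_
      refine le_trans (le_of_eq ?_) hclose
      simp [Real.norm_eq_abs]
    have hmw_le : ∀ t, |mw t| ≤ A := fun t => abs_primitive_le hw t
    have hmg_le : ∀ t, |mg t| ≤ A + 1 := by
      intro t
      have h := abs_le.1 (hdiffm t)
      have h2 := abs_le.1 (hmw_le t)
      rw [abs_le]
      constructor <;> linarith
    have hmwc : Continuous mw := hw.continuous_primitive 0
    have hmgc : Continuous mg := gint.continuous_primitive 0
    have hEwc : Continuous (fun t => Real.exp (mw t)) := Real.continuous_exp.comp hmwc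
    have hEgc : Continuous (fun t => Real.exp (mg t)) := Real.continuous_exp.comp hmgc
    have IIw : IntervalIntegrable (fun t => w t * Real.exp (mw t)) volume 0 x :=
      (hw.intervalIntegrable).mul_continuousOn hEwc.continuousOn
    have IIg : IntervalIntegrable (fun t => g t * Real.exp (mg t)) volume 0 x :=
      (gint.intervalIntegrable).mul_continuousOn hEgc.continuousOn
    have claim1 : (∫ t in (0:ℝ)..x, g t * Real.exp (mg t)) = Real.exp (mg x) - 1 :=
      exp_primitive_eq_cont gint gcont x
    set bnd : ℝ → ℝ := fun t => Real.exp A * |w t - g t| + Real.exp (A+1) * δ * |g t| with hbnd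
    have bndint : Integrable bnd volume :=
      ((hwg.abs).const_mul _).add ((gint.abs).const_mul _)
    have hpt : ∀ t, |w t * Real.exp (mw t) - g t * Real.exp (mg t)| ≤ bnd t := by
      intro t
      have e1 : w t * Real.exp (mw t) - g t * Real.exp (mg t)
          = (w t - g t) * Real.exp (mw t) + g t * (Real.exp (mw t) - Real.exp (mg t)) := by ring
      rw [e1]
      refine (abs_add_le _ _).trans ?_
      rw [abs_mul, abs_mul, _root_.abs_of_nonneg (Real.exp_pos _).le]
      have b1 : Real.exp (mw t) ≤ Real.exp A := Real.exp_le_exp.2 (le_of_abs_le (hmw_le t))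
      have b2 : |Real.exp (mw t) - Real.exp (mg t)| ≤ Real.exp (A+1) * δ := by
        refine (exp_sub_exp_le ((hmw_le t).trans (by linarith)) (hmg_le t)).trans ?_
        exact mul_le_mul_of_nonneg_left (hdiffm t) (Real.exp_pos _).le
      have := mul_le_mul_of_nonneg_left b1 (abs_nonneg (w t - g t))
      have := mul_le_mul_of_nonneg_left b2 (abs_nonneg (g t))
      simp only [hbnd]
      nlinarith [abs_nonneg (w t - g t), abs_nonneg (g t)]
    have hLg : |(∫ t in (0:ℝ)..x, w t * Real.exp (mw t))
        - ∫ t in (0:ℝ)..x, g t * Real.exp (mg t)|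
        ≤ Real.exp A * δ + Real.exp (A+1) * δ * (A + 1) := by
      have e1 : (∫ t in (0:ℝ)..x, w t * Real.exp (mw t))
          - ∫ t in (0:ℝ)..x, g t * Real.exp (mg t)
          = ∫ t in (0:ℝ)..x, (w t * Real.exp (mw t) - g t * Real.exp (mg t)) :=
        (intervalIntegral.integral_sub IIw IIg).symm
      rw [e1, ← Real.norm_eq_abs]
      refine intervalIntegral.norm_integral_le_integral_norm_uIoc.trans ?_
      have s1 : (∫ t in Ι (0:ℝ) x, ‖w t * Real.exp (mw t) - g t * Real.exp (mg t)‖) ≤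
          ∫ t in Ι (0:ℝ) x, bnd t := by
        apply setIntegral_mono_on
        · exact intervalIntegrable_iff.1 (IIw.sub IIg).norm
        · exact bndint.integrableOn
        · exact measurableSet_uIoc
        · intro t _
          rw [Real.norm_eq_abs]
          exact hpt t
      refine s1.trans ?_
      have s2 : (∫ t in Ι (0:ℝ) x, bnd t) ≤ ∫ t, bnd t := by
        apply setIntegral_le_integral bndint
        refine Eventually.of_forall fun t => ?_
        have := abs_nonneg (w t - g t)
        have := abs_nonneg (g t)
        have := (Real.exp_pos A).le
        have := (Real.exp_pos (A+1)).le
        simp only [hbnd]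
        positivity
      refine s2.trans ?_
      have s3 : (∫ t, bnd t) = Real.exp A * (∫ t, |w t - g t|)
          + Real.exp (A+1) * δ * ∫ t, |g t| := by
        rw [hbnd]
        rw [integral_add ((hwg.abs).const_mul _) ((gint.abs).const_mul _),
          integral_const_mul, integral_const_mul]
      rw [s3]
      have s4 : (∫ t, |w t - g t|) ≤ δ := by
        refine le_trans (le_of_eq ?_) hclose
        simp [Real.norm_eq_abs]
      have s5 : (∫ t, |g t|) ≤ A + 1 := by
        have pt : ∀ t, |g t| ≤ |w t| + |w t - g t| := by
          intro t
          have := abs_sub (w t) (g t)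
          calc |g t| = |w t - (w t - g t)| := by ring_nf
            _ ≤ |w t| + |w t - g t| := abs_sub _ _
        have : (∫ t, |g t|) ≤ ∫ t, (|w t| + |w t - g t|) :=
          integral_mono gint.abs (hw.abs.add hwg.abs) pt
        rw [integral_add hw.abs hwg.abs] at this
        have := s4
        linarith
      have e0 : (0:ℝ) ≤ Real.exp A := (Real.exp_pos _).le
      have e1' : (0:ℝ) ≤ Real.exp (A+1) * δ := by positivity
      nlinarith
    have hRg : |Real.exp (mg x) - 1 - (Real.exp (mw x) - 1)| ≤ Real.exp (A+1) * δ := by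
      have : |Real.exp (mg x) - 1 - (Real.exp (mw x) - 1)| = |Real.exp (mg x) - Real.exp (mw x)| := by
        congr 1; ring
      rw [this]
      refine (exp_sub_exp_le (hmg_le x) ((hmw_le x).trans (by linarith))).trans ?_
      rw [abs_sub_comm]
      exact mul_le_mul_of_nonneg_left (hdiffm x) (Real.exp_pos _).le
    calc |(∫ t in (0:ℝ)..x, w t * Real.exp (mw t)) - (Real.exp (mw x) - 1)|
        ≤ |(∫ t in (0:ℝ)..x, w t * Real.exp (mw t)) - ∫ t in (0:ℝ)..x, g t * Real.exp (mg t)|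
          + |(∫ t in (0:ℝ)..x, g t * Real.exp (mg t)) - (Real.exp (mw x) - 1)| := abs_sub_le _ _ _
      _ ≤ (Real.exp A * δ + Real.exp (A+1) * δ * (A + 1)) + Real.exp (A+1) * δ := by
          refine add_le_add hLg ?_
          rw [claim1]
          exact hRg
      _ = C * δ := by rw [hC_def]; ring
  -- conclude equality
  by_contra hne
  have hpos : 0 < |L - Rr| := abs_pos.2 (sub_ne_zero.2 hne)
  set δ := min 1 (|L - Rr| / (2 * C)) with hδ_def
  have hδpos : 0 < δ := lt_min one_pos (by positivity)
  have h1 := main δ hδpos (min_le_left _ _)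
  have h2 : C * δ ≤ C * (|L - Rr| / (2 * C)) :=
    mul_le_mul_of_nonneg_left (min_le_right _ _) hCpos.le
  have h3 : C * (|L - Rr| / (2 * C)) = |L - Rr| / 2 := by field_simp
  have h4 : |L - Rr| ≤ |L - Rr| / 2 := h1.trans (h2.trans_eq h3)
  linarith


section Existence

variable {R : ℝ} {V : ℝ → ℂ} {z : ℂ}

lemma exists_sol (hR : 0 < R) (hV : IntegrableOn V (Ioo 0 R)) (a b : ℂ) :
    ∃ u u' : ℝ → ℂ, IsSol R V z u u' ∧ u 0 = a ∧ u' 0 = b := by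
  classical
  -- the truncated potential
  set Vz : ℝ → ℂ := (Ioo (0:ℝ) R).indicator (fun t => V t - z) with hVz_def
  have hVz : Integrable Vz volume := by
    rw [hVz_def, integrable_indicator_iff measurableSet_Ioo]
    exact hV.sub (integrableOn_const (hs := measure_Ioo_lt_top.ne))
  set w : ℝ → ℝ := fun t => ‖Vz t‖ with hw_def
  have hw : Integrable w volume := hVz.norm
  have hw0 : ∀ t, 0 ≤ w t := fun t => norm_nonneg _
  set m : ℝ → ℝ := fun t => ∫ s in (0:ℝ)..t, w s with hm_def
  have hm_cont : Continuous m := hw.continuous_primitive 0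
  set E : ℝ → ℝ := fun t => Real.exp ((R+1) * m t) with hE_def
  set Einv : ℝ → ℝ := fun t => Real.exp (-((R+1) * m t)) with hEinv_def
  have hE_cont : Continuous E := Real.continuous_exp.comp (continuous_const.mul hm_cont)
  have hEinv_cont : Continuous Einv :=
    Real.continuous_exp.comp (continuous_const.mul hm_cont).neg
  have hE_pos : ∀ t, 0 < E t := fun t => Real.exp_pos _
  have hEinv_pos : ∀ t, 0 < Einv t := fun t => Real.exp_pos _
  have hEEinv : ∀ t, Einv t * E t = 1 := by
    intro t; rw [hE_def, hEinv_def, ← Real.exp_add]; simp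
  set A : ℝ := ∫ s, |w s| with hA_def
  have hm_bd : ∀ t, |m t| ≤ A := fun t => abs_primitive_le hw t
  have hE_bd : ∀ t, E t ≤ Real.exp ((R+1) * A) := by
    intro t
    apply Real.exp_le_exp.2
    have := le_of_abs_le (hm_bd t)
    nlinarith [hR, abs_nonneg (m t), neg_abs_le (m t)]
  -- the key exponential identity
  have keyI : ∀ x : ℝ, (R+1) * ∫ t in (0:ℝ)..x, w t * E t = E x - 1 := by
    intro x
    have h1 := exp_primitive_eq (w := fun t => (R+1) * w t) (hw.const_mul _) x
    have inner : ∀ t : ℝ, (∫ s in (0:ℝ)..t, (R+1) * w s) = (R+1) * m t := fun t =>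
      intervalIntegral.integral_const_mul _ _
    have h2 : (∫ t in (0:ℝ)..x, (R+1) * w t * Real.exp (∫ s in (0:ℝ)..t, (R+1) * w s))
        = ∫ t in (0:ℝ)..x, (R+1) * (w t * E t) := by
      refine intervalIntegral.integral_congr fun t _ => ?_
      rw [inner t, hE_def]; ring
    rw [h2, inner x] at h1
    rw [intervalIntegral.integral_const_mul] at h1
    rw [hE_def]
    exact h1
  -- the contraction
  set proj : ℝ → Icc (0:ℝ) R := fun t => Set.projIcc 0 R hR.le t with hproj_def
  have hproj_cont : Continuous proj := continuous_projIcc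
  have hkint : ∀ v : C(Icc (0:ℝ) R, ℂ),
      Integrable (fun t => ((E t : ℂ) * v (proj t)) * Vz t) volume := by
    intro v
    have hc : Continuous fun t : ℝ => (E t : ℂ) * v (proj t) :=
      (Complex.continuous_ofReal.comp hE_cont).mul (v.continuous.comp hproj_cont)
    apply hVz.bdd_mul hc.aestronglyMeasurable (c := Real.exp ((R+1) * A) * ‖v‖)
    refine Eventually.of_forall fun t => ?_
    rw [norm_mul, Complex.norm_real, Real.norm_eq_abs, _root_.abs_of_nonneg (hE_pos t).le]
    exact mul_le_mul (hE_bd t) (v.norm_coe_le_norm _) (norm_nonneg _) (Real.exp_pos _).le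
  have hΦc : ∀ v : C(Icc (0:ℝ) R, ℂ), Continuous fun x : ℝ => Einv x • (a + b * x +
      ∫ t in (0:ℝ)..x, ((x - t : ℝ) : ℂ) * (((E t : ℂ) * v (proj t)) * Vz t)) := by
    intro v
    have hQc : Continuous fun x : ℝ => ∫ t in (0:ℝ)..x,
        ((x - t : ℝ) : ℂ) * (((E t : ℂ) * v (proj t)) * Vz t) :=
      continuous_iff_continuousAt.2 fun x => (hasDerivAt_kernel (hkint v) x).continuousAt
    have haff : Continuous fun x : ℝ => a + b * (x : ℂ) :=
      continuous_const.add (continuous_const.mul Complex.continuous_ofReal)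
    exact hEinv_cont.smul (haff.add hQc)
  set Φ : C(Icc (0:ℝ) R, ℂ) → C(Icc (0:ℝ) R, ℂ) := fun v =>
    ⟨fun p => Einv p • (a + b * (p:ℝ) +
        ∫ t in (0:ℝ)..(p:ℝ), (((p:ℝ) - t : ℝ) : ℂ) * (((E t : ℂ) * v (proj t)) * Vz t)),
      (hΦc v).comp continuous_subtype_val⟩ with hΦ_def
  have hΦ_apply : ∀ (v : C(Icc (0:ℝ) R, ℂ)) (p : Icc (0:ℝ) R), Φ v p = Einv p • (a + b * (p:ℝ) +
      ∫ t in (0:ℝ)..(p:ℝ), (((p:ℝ) - t : ℝ) : ℂ) * (((E t : ℂ) * v (proj t)) * Vz t)) := by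
    intro v p
    simp only [hΦ_def, ContinuousMap.coe_mk]
  have hcontr : ∀ v v' : C(Icc (0:ℝ) R, ℂ),
      dist (Φ v) (Φ v') ≤ (R / (R+1)) * dist v v' := by
    intro v v'
    have hd0 : 0 ≤ dist v v' := dist_nonneg
    rw [ContinuousMap.dist_le (by positivity)]
    intro p
    obtain ⟨x, hx⟩ : ∃ x : ℝ, (p : ℝ) = x ∧ x ∈ Icc (0:ℝ) R := ⟨(p:ℝ), rfl, p.2⟩
    rw [dist_eq_norm]
    have hΦv : Φ v p - Φ v' p = Einv (p:ℝ) • ∫ t in (0:ℝ)..(p:ℝ),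
        (((p:ℝ) - t : ℝ) : ℂ) * (((E t : ℂ) * (v (proj t) - v' (proj t))) * Vz t) := by
      rw [hΦ_apply v p, hΦ_apply v' p, ← smul_sub]
      congr 1
      rw [add_sub_add_left_eq_sub]
      rw [← intervalIntegral.integral_sub (II_kernel (hkint v) _ _ _) (II_kernel (hkint v') _ _ _)]
      refine intervalIntegral.integral_congr fun t _ => ?_
      ring
    rw [hΦv, norm_smul, Real.norm_eq_abs, _root_.abs_of_nonneg (hEinv_pos _).le]
    have hx0 : (0:ℝ) ≤ (p:ℝ) := p.2.1
    have hxR : (p:ℝ) ≤ R := p.2.2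
    have hId : Integrable (fun t => ((E t : ℂ) * (v (proj t) - v' (proj t))) * Vz t) volume := by
      have := hkint (v - v')
      simpa using this
    have hb1 : ‖∫ t in (0:ℝ)..(p:ℝ),
        (((p:ℝ) - t : ℝ) : ℂ) * (((E t : ℂ) * (v (proj t) - v' (proj t))) * Vz t)‖
        ≤ ∫ t in Ι (0:ℝ) (p:ℝ), ‖(((p:ℝ) - t : ℝ) : ℂ) * (((E t : ℂ) * (v (proj t) - v' (proj t))) * Vz t)‖ :=
      intervalIntegral.norm_integral_le_integral_norm_uIoc
    have hwE : Integrable (fun t => w t * E t) volume := by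
      refine (hw.bdd_mul (hE_cont.aestronglyMeasurable) (c := Real.exp ((R+1)*A))
        (Eventually.of_forall fun t => ?_)).congr ?_
      · rw [Real.norm_eq_abs, _root_.abs_of_nonneg (hE_pos t).le]; exact hE_bd t
      · exact Eventually.of_forall fun t => mul_comm _ _
    have hb2 : (∫ t in Ι (0:ℝ) (p:ℝ), ‖(((p:ℝ) - t : ℝ) : ℂ) * (((E t : ℂ) * (v (proj t) - v' (proj t))) * Vz t)‖)
        ≤ ∫ t in Ι (0:ℝ) (p:ℝ), (R * dist v v') * (w t * E t) := by
      apply setIntegral_mono_on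
      · exact intervalIntegrable_iff.1 (II_kernel hId (p:ℝ) 0 (p:ℝ)).norm
      · exact ((hwE.const_mul _)).integrableOn
      · exact measurableSet_uIoc
      · intro t ht
        rw [uIoc_of_le hx0] at ht
        rw [norm_mul, norm_mul, norm_mul, Complex.norm_real, Complex.norm_real,
          Real.norm_eq_abs, Real.norm_eq_abs, _root_.abs_of_nonneg (hE_pos t).le]
        have e1 : |(p:ℝ) - t| ≤ R := by
          rw [_root_.abs_of_nonneg (by linarith [ht.2] : (0:ℝ) ≤ (p:ℝ) - t)]
          linarith [ht.1]
        have e2 : ‖v (proj t) - v' (proj t)‖ ≤ dist v v' := by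
          rw [← dist_eq_norm]
          exact ContinuousMap.dist_apply_le_dist _
        calc |(p:ℝ) - t| * (E t * ‖v (proj t) - v' (proj t)‖ * ‖Vz t‖)
            ≤ R * (E t * dist v v' * ‖Vz t‖) := by
              apply mul_le_mul e1 _ (by positivity) (by linarith [hR])
              have := (hE_pos t).le
              apply mul_le_mul_of_nonneg_right _ (norm_nonneg _)
              exact mul_le_mul_of_nonneg_left e2 this
          _ = (R * dist v v') * (w t * E t) := by rw [hw_def]; ring
    have hb3 : (∫ t in Ι (0:ℝ) (p:ℝ), (R * dist v v') * (w t * E t))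
        = (R * dist v v') * ∫ t in (0:ℝ)..(p:ℝ), w t * E t := by
      rw [uIoc_of_le hx0, ← intervalIntegral.integral_of_le hx0,
        intervalIntegral.integral_const_mul]
    have hb4 : (∫ t in (0:ℝ)..(p:ℝ), w t * E t) = (E (p:ℝ) - 1) / (R+1) := by
      have := keyI (p:ℝ)
      field_simp
      linarith [this]
    have hb5 : Einv (p:ℝ) * (E (p:ℝ) - 1) ≤ 1 := by
      have h1 := hEEinv (p:ℝ)
      have h2 := (hEinv_pos (p:ℝ)).le
      nlinarith
    calc Einv (p:ℝ) * ‖∫ t in (0:ℝ)..(p:ℝ),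
          (((p:ℝ) - t : ℝ) : ℂ) * (((E t : ℂ) * (v (proj t) - v' (proj t))) * Vz t)‖
        ≤ Einv (p:ℝ) * ((R * dist v v') * ((E (p:ℝ) - 1) / (R+1))) := by
          apply mul_le_mul_of_nonneg_left _ (hEinv_pos _).le
          refine hb1.trans (hb2.trans (le_of_eq ?_))
          rw [hb3, hb4]
      _ = (R * dist v v' / (R+1)) * (Einv (p:ℝ) * (E (p:ℝ) - 1)) := by ring
      _ ≤ (R * dist v v' / (R+1)) * 1 := by
          apply mul_le_mul_of_nonneg_left hb5 (by positivity)
      _ = R / (R+1) * dist v v' := by ring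
  have hK : (⟨R / (R+1), by positivity⟩ : NNReal) < 1 := by
    refine NNReal.coe_lt_coe.1 ?_
    show R / (R+1) < 1
    rw [div_lt_one (by linarith)]
    linarith
  have hΦcontr : ContractingWith ⟨R / (R+1), by positivity⟩ Φ :=
    ⟨hK, LipschitzWith.of_dist_le_mul hcontr⟩
  set q : C(Icc (0:ℝ) R, ℂ) := ContractingWith.fixedPoint Φ hΦcontr with hq_def
  have hfix : Φ q = q := hΦcontr.fixedPoint_isFixedPt
  -- the solution
  set f₀ : ℝ → ℂ := fun t => ((E t : ℂ) * q (proj t)) * Vz t with hf₀_def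
  have hf₀ : Integrable f₀ volume := hkint q
  set G : ℝ → ℂ := fun x => a + b * x + ∫ t in (0:ℝ)..x, ((x - t : ℝ) : ℂ) * f₀ t with hG_def
  set G' : ℝ → ℂ := fun x => b + ∫ t in (0:ℝ)..x, f₀ t with hG'_def
  have hG : ∀ x : ℝ, HasDerivAt G (G' x) x := by
    intro x
    have h0 : HasDerivAt (fun y : ℝ => (y : ℂ)) 1 x := by
      simpa using (hasDerivAt_id x).ofReal_comp
    have h1 : HasDerivAt (fun y : ℝ => a + b * (y : ℂ)) b x := by
      simpa using (h0.const_mul b).const_add a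
    exact h1.add (hasDerivAt_kernel hf₀ x)
  have huG : ∀ x ∈ Icc (0:ℝ) R, (E x : ℂ) * q (proj x) = G x := by
    intro x hx
    have hp : proj x = ⟨x, hx⟩ := by
      rw [hproj_def]
      exact Set.projIcc_of_mem hR.le hx
    have hq : q ⟨x, hx⟩ = Einv x • (a + b * x +
        ∫ t in (0:ℝ)..x, ((x - t : ℝ) : ℂ) * (((E t : ℂ) * q (proj t)) * Vz t)) := by
      have h := ContinuousMap.congr_fun hfix ⟨x, hx⟩
      rw [hΦ_apply q ⟨x, hx⟩] at h
      exact h.symm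
    rw [hp, hq, hG_def]
    rw [Complex.real_smul, ← mul_assoc, ← Complex.ofReal_mul, mul_comm (E x) (Einv x), hEEinv x]
    simp [hf₀_def]
  refine ⟨G, G', ⟨fun x _ => hG x, ?_⟩, by simp [hG_def], by simp [hG'_def]⟩
  intro x hx
  have hG'0 : G' 0 = b := by simp [hG'_def]
  have hx0 : (0:ℝ) ≤ x := hx.1
  have hcongr : (∫ t in (0:ℝ)..x, ((V t - z) * G t - (0 : ℝ → ℂ) t)) = ∫ t in (0:ℝ)..x, f₀ t := by
    apply intervalIntegral.integral_congr_ae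
    have hne : ∀ᵐ (t : ℝ) ∂volume, t ≠ R := by
      rw [ae_iff]
      simp only [ne_eq, not_not, setOf_eq_eq_singleton]
      exact measure_singleton R
    filter_upwards [hne] with t htR hmem
    rw [uIoc_of_le hx0] at hmem
    have htIoo : t ∈ Ioo (0:ℝ) R := ⟨hmem.1, lt_of_le_of_ne (hmem.2.trans hx.2) htR⟩
    have htIcc : t ∈ Icc (0:ℝ) R := ⟨hmem.1.le, (hmem.2.trans hx.2)⟩
    have hVzt : Vz t = V t - z := by rw [hVz_def]; exact Set.indicator_of_mem htIoo _
    simp only [Pi.zero_apply, sub_zero]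
    rw [← huG t htIcc]
    simp only [hf₀_def]
    rw [hVzt]
    ring
  rw [hcongr, hG'0]

end Existence

section Algebra

variable {R : ℝ} {V : ℝ → ℂ} {z : ℂ}

lemma sol_continuousOn {u u' : ℝ → ℂ} (h : IsSol R V z u u') :
    ContinuousOn u (Icc 0 R) :=
  fun x hx => ((h.1 x hx).continuousAt).continuousWithinAt

lemma sol_II (hV : IntegrableOn V (Ioo 0 R)) {u : ℝ → ℂ}
    (hu : ContinuousOn u (Icc 0 R)) {x : ℝ} (hx : x ∈ Icc (0:ℝ) R) :
    IntervalIntegrable (fun t => (V t - z) * u t) volume 0 x := by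
  have h1 : IntegrableOn (fun t => V t - z) (Icc 0 R) volume := by
    have h0 : IntegrableOn (fun t => V t - z) (Ioo 0 R) volume :=
      hV.sub (integrableOn_const (hs := measure_Ioo_lt_top.ne))
    exact h0.congr_set_ae Ioo_ae_eq_Icc.symm
  have h2 : IntegrableOn (fun t => (V t - z) * u t) (Icc 0 R) volume :=
    h1.mul_continuousOn hu isCompact_Icc
  apply MeasureTheory.IntegrableOn.intervalIntegrable
  apply h2.mono_set
  rw [uIcc_of_le hx.1]
  exact Icc_subset_Icc_right hx.2

lemma sol_combo (hV : IntegrableOn V (Ioo 0 R)) (c₁ c₂ : ℂ) {u₁ u₁' u₂ u₂' : ℝ → ℂ}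
    (h₁ : IsSol R V z u₁ u₁') (h₂ : IsSol R V z u₂ u₂') :
    IsSol R V z (fun t => c₁ * u₁ t + c₂ * u₂ t) (fun t => c₁ * u₁' t + c₂ * u₂' t) := by
  constructor
  · intro x hx
    exact ((h₁.1 x hx).const_mul c₁).add ((h₂.1 x hx).const_mul c₂)
  · intro x hx
    have e₁ := h₁.2 x hx
    have e₂ := h₂.2 x hx
    simp only [Pi.zero_apply, sub_zero] at e₁ e₂ ⊢
    have hI : (∫ t in (0:ℝ)..x, (V t - z) * (c₁ * u₁ t + c₂ * u₂ t))
        = c₁ * (∫ t in (0:ℝ)..x, (V t - z) * u₁ t)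
          + c₂ * ∫ t in (0:ℝ)..x, (V t - z) * u₂ t := by
      rw [← intervalIntegral.integral_const_mul, ← intervalIntegral.integral_const_mul,
        ← intervalIntegral.integral_add ((sol_II hV (sol_continuousOn h₁) hx).const_mul c₁)
          ((sol_II hV (sol_continuousOn h₂) hx).const_mul c₂)]
      exact intervalIntegral.integral_congr fun t _ => by ring
    rw [hI, e₁, e₂]
    ring

lemma sol_vanish (hR : 0 < R) {u u' : ℝ → ℂ} (hsol : IsSol R V z u u')
    (hvan : ∀ x ∈ Icc (0:ℝ) R, u x = 0) : ∀ x ∈ Icc (0:ℝ) R, u' x = 0 := by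
  have hIeq : ∀ x ∈ Icc (0:ℝ) R, u' x = u' 0 := by
    intro x hx
    have h := hsol.2 x hx
    have hzero : (∫ t in (0:ℝ)..x, ((V t - z) * u t - (0 : ℝ → ℂ) t)) = 0 := by
      have : EqOn (fun t => (V t - z) * u t - (0 : ℝ → ℂ) t) (fun _ => (0:ℂ)) (uIcc (0:ℝ) x) := by
        intro t ht
        rw [uIcc_of_le hx.1] at ht
        have : u t = 0 := hvan t ⟨ht.1, ht.2.trans hx.2⟩
        simp [this]
      rw [intervalIntegral.integral_congr this, intervalIntegral.integral_zero]
    rw [hzero, add_zero] at h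
    exact h
  have hmem : R / 2 ∈ Icc (0:ℝ) R := ⟨by linarith, by linarith⟩
  have hmid : u' (R/2) = 0 := by
    have hIoo : Ioo (0:ℝ) R ∈ nhds (R/2) :=
      isOpen_Ioo.mem_nhds ⟨by linarith, by linarith⟩
    have hev : u =ᶠ[nhds (R/2)] (fun _ => (0:ℂ)) := by
      filter_upwards [hIoo] with y hy
      exact hvan y ⟨hy.1.le, hy.2.le⟩
    have h0 : HasDerivAt u 0 (R/2) :=
      (hasDerivAt_const (R/2) (0:ℂ)).congr_of_eventuallyEq hev
    exact (hsol.1 (R/2) hmem).unique h0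
  have h0 : u' 0 = 0 := by
    have := hIeq (R/2) hmem
    rw [hmid] at this
    exact this.symm
  intro x hx
  rw [hIeq x hx, h0]

lemma bTrace_combo (θa θb c₁ c₂ : ℂ) (u₁ u₁' u₂ u₂' : ℝ → ℂ) :
    bTrace R θa θb (fun t => c₁ * u₁ t + c₂ * u₂ t) (fun t => c₁ * u₁' t + c₂ * u₂' t)
      = fun i => c₁ * bTrace R θa θb u₁ u₁' i + c₂ * bTrace R θa θb u₂ u₂' i := by
  funext i
  fin_cases i <;> simp [bTrace] <;> ring

lemma trace_welldef (hR : 0 < R) (hV : IntegrableOn V (Ioo 0 R)) {θ0 θR : ℂ}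
    (hz : ¬ IsEigenvalue R V θ0 θR z) {u u' v v' : ℝ → ℂ}
    (hu : IsSol R V z u u') (hv : IsSol R V z v v')
    (hEq : bTrace R θ0 θR u u' = bTrace R θ0 θR v v') :
    ∀ θa θb : ℂ, bTrace R θa θb u u' = bTrace R θa θb v v' := by
  set d : ℝ → ℂ := fun t => 1 * u t + (-1) * v t with hd_def
  set d' : ℝ → ℂ := fun t => 1 * u' t + (-1) * v' t with hd'_def
  have hd : IsSol R V z d d' := sol_combo hV 1 (-1) hu hv
  have htr0 : bTrace R θ0 θR d d' = 0 := by
    rw [hd_def, hd'_def, bTrace_combo]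
    funext i
    rw [hEq]
    simp
  have hdvan : ∀ x ∈ Icc (0:ℝ) R, d x = 0 := by
    by_contra hch
    push_neg at hch
    obtain ⟨x, hx, hne⟩ := hch
    exact hz ⟨d, d', hd, htr0, x, hx, hne⟩
  have hd'van : ∀ x ∈ Icc (0:ℝ) R, d' x = 0 := sol_vanish hR hd hdvan
  have h0m : (0:ℝ) ∈ Icc (0:ℝ) R := ⟨le_refl _, hR.le⟩
  have hRm : R ∈ Icc (0:ℝ) R := ⟨hR.le, le_refl _⟩
  have eu0 : u 0 = v 0 := by have := hdvan 0 h0m; rw [hd_def] at this; linear_combination this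
  have euR : u R = v R := by have := hdvan R hRm; rw [hd_def] at this; linear_combination this
  have eu'0 : u' 0 = v' 0 := by have := hd'van 0 h0m; rw [hd'_def] at this; linear_combination this
  have eu'R : u' R = v' R := by have := hd'van R hRm; rw [hd'_def] at this; linear_combination this
  intro θa θb
  funext i
  fin_cases i <;> simp [bTrace, eu0, euR, eu'0, eu'R]

lemma exists_sol_trace (hR : 0 < R) (hV : IntegrableOn V (Ioo 0 R)) {θ0 θR : ℂ}
    (hz : ¬ IsEigenvalue R V θ0 θR z) (c : Fin 2 → ℂ) :
    ∃ u u' : ℝ → ℂ, IsSol R V z u u' ∧ bTrace R θ0 θR u u' = c := by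
  obtain ⟨u₁, u₁', hs₁, hu₁0, hu₁'0⟩ := exists_sol (V := V) (z := z) hR hV 1 0
  obtain ⟨u₂, u₂', hs₂, hu₂0, hu₂'0⟩ := exists_sol (V := V) (z := z) hR hV 0 1
  set B : Matrix (Fin 2) (Fin 2) ℂ :=
    Matrix.of fun i j => (![bTrace R θ0 θR u₁ u₁', bTrace R θ0 θR u₂ u₂'] j) i with hB_def
  have hcombo_trace : ∀ p : Fin 2 → ℂ,
      bTrace R θ0 θR (fun t => p 0 * u₁ t + p 1 * u₂ t) (fun t => p 0 * u₁' t + p 1 * u₂' t)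
        = B.mulVec p := by
    intro p
    rw [bTrace_combo]
    funext i
    rw [Matrix.mulVec, dotProduct, Fin.sum_univ_two]
    simp only [hB_def, Matrix.of_apply, Matrix.cons_val_zero, Matrix.cons_val_one, Matrix.head_cons]
    ring
  have hinj : Function.Injective B.mulVecLin := by
    rw [injective_iff_map_eq_zero]
    intro p hp
    have hptr : bTrace R θ0 θR (fun t => p 0 * u₁ t + p 1 * u₂ t)
        (fun t => p 0 * u₁' t + p 1 * u₂' t) = 0 := by
      rw [hcombo_trace p]
      exact hp
    have hsol := sol_combo hV (p 0) (p 1) hs₁ hs₂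
    have hvan : ∀ x ∈ Icc (0:ℝ) R, p 0 * u₁ x + p 1 * u₂ x = 0 := by
      by_contra hch
      push_neg at hch
      obtain ⟨x, hx, hne⟩ := hch
      exact hz ⟨_, _, hsol, hptr, x, hx, hne⟩
    have h0m : (0:ℝ) ∈ Icc (0:ℝ) R := ⟨le_refl _, hR.le⟩
    have hp0 : p 0 = 0 := by
      have := hvan 0 h0m
      rw [hu₁0, hu₂0] at this
      simpa using this
    have hvan' := sol_vanish hR hsol hvan 0 h0m
    have hp1 : p 1 = 0 := by
      rw [hu₁'0, hu₂'0] at hvan'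
      simpa using hvan'
    funext i
    fin_cases i
    · exact hp0
    · exact hp1
  have hsurj : Function.Surjective B.mulVecLin :=
    (LinearMap.injective_iff_surjective).1 hinj
  obtain ⟨p, hp⟩ := hsurj c
  refine ⟨fun t => p 0 * u₁ t + p 1 * u₂ t, fun t => p 0 * u₁' t + p 1 * u₂' t,
    sol_combo hV (p 0) (p 1) hs₁ hs₂, ?_⟩
  rw [hcombo_trace p]
  exact hp

lemma lambdaMap_eq (hR : 0 < R) (hV : IntegrableOn V (Ioo 0 R)) {θ0 θR : ℂ}
    (hz : ¬ IsEigenvalue R V θ0 θR z) {u u' : ℝ → ℂ} {c : Fin 2 → ℂ}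
    (hsol : IsSol R V z u u') (htr : bTrace R θ0 θR u u' = c) (θa θb : ℂ) :
    lambdaMap R V θ0 θR θa θb z c = bTrace R θa θb u u' := by
  have hex : ∃ p : (ℝ → ℂ) × (ℝ → ℂ), IsSol R V z p.1 p.2 ∧ bTrace R θ0 θR p.1 p.2 = c :=
    ⟨(u, u'), hsol, htr⟩
  rw [lambdaMap, dif_pos hex]
  have hspec := hex.choose_spec
  exact trace_welldef hR hV hz hspec.1 hsol (hspec.2.trans htr.symm) θa θb

lemma lambdaMat_mul (hR : 0 < R) (hV : IntegrableOn V (Ioo 0 R)) {θ0 θR θ0' θR' : ℂ}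
    (hz : ¬ IsEigenvalue R V θ0 θR z) (hz' : ¬ IsEigenvalue R V θ0' θR' z) :
    lambdaMat R V θ0' θR' θ0 θR z * lambdaMat R V θ0 θR θ0' θR' z = 1 := by
  ext i j
  rw [Matrix.mul_apply, Fin.sum_univ_two]
  obtain ⟨s, s', hs, hstr⟩ := exists_sol_trace hR hV hz (Pi.single j 1)
  obtain ⟨v₀, v₀', hv₀, hv₀tr⟩ := exists_sol_trace hR hV hz' (Pi.single 0 1)
  obtain ⟨v₁, v₁', hv₁, hv₁tr⟩ := exists_sol_trace hR hV hz' (Pi.single 1 1)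
  set c' : Fin 2 → ℂ := bTrace R θ0' θR' s s' with hc'_def
  have hL : ∀ k, lambdaMat R V θ0 θR θ0' θR' z k j = c' k := by
    intro k
    show lambdaMap R V θ0 θR θ0' θR' z (Pi.single j 1) k = c' k
    rw [lambdaMap_eq hR hV hz hs hstr θ0' θR']
  have hM0 : lambdaMat R V θ0' θR' θ0 θR z i 0 = bTrace R θ0 θR v₀ v₀' i := by
    show lambdaMap R V θ0' θR' θ0 θR z (Pi.single 0 1) i = _
    rw [lambdaMap_eq hR hV hz' hv₀ hv₀tr θ0 θR]
  have hM1 : lambdaMat R V θ0' θR' θ0 θR z i 1 = bTrace R θ0 θR v₁ v₁' i := by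
    show lambdaMap R V θ0' θR' θ0 θR z (Pi.single 1 1) i = _
    rw [lambdaMap_eq hR hV hz' hv₁ hv₁tr θ0 θR]
  have hcsol : IsSol R V z (fun t => c' 0 * v₀ t + c' 1 * v₁ t)
      (fun t => c' 0 * v₀' t + c' 1 * v₁' t) := sol_combo hV _ _ hv₀ hv₁
  have hctr : bTrace R θ0' θR' (fun t => c' 0 * v₀ t + c' 1 * v₁ t)
      (fun t => c' 0 * v₀' t + c' 1 * v₁' t) = c' := by
    rw [bTrace_combo]
    funext k
    rw [hv₀tr, hv₁tr]
    fin_cases k <;> simp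
  have hkey : bTrace R θ0 θR (fun t => c' 0 * v₀ t + c' 1 * v₁ t)
      (fun t => c' 0 * v₀' t + c' 1 * v₁' t) = bTrace R θ0 θR s s' :=
    trace_welldef hR hV hz' hcsol hs hctr θ0 θR
  have h2 : c' 0 * bTrace R θ0 θR v₀ v₀' i + c' 1 * bTrace R θ0 θR v₁ v₁' i
      = bTrace R θ0 θR s s' i := by
    have h2' := congrFun hkey i
    simp only [bTrace_combo] at h2'
    exact h2'
  have h3 := congrFun hstr i
  rw [hL 0, hL 1, hM0, hM1, Matrix.one_apply]
  by_cases hij : i = j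
  · rw [if_pos hij]
    subst hij
    rw [Pi.single_eq_same] at h3
    linear_combination h2 + h3
  · rw [if_neg hij]
    rw [Pi.single_eq_of_ne hij] at h3
    linear_combination h2 + h3

end Algebra

end BDMaux

/-- For `θ₀, θ_R, θ₀', θ_R' ∈ S_{2π}` and
`z ∈ ℂ \ (σ(H_{θ₀,θ_R}) ∪ σ(H_{θ₀',θ_R'}))`, the `2 × 2` matrix
`Λ_{θ₀,θ_R}^{θ₀',θ_R'}(z)` is invertible and its inverse is
`Λ_{θ₀',θ_R'}^{θ₀,θ_R}(z)`. -/
theorem lambda_invertible_and_inverse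
    (R : ℝ) (hR : 0 < R) (V : ℝ → ℂ) (hV : IntegrableOn V (Ioo 0 R))
    (θ0 θR θ0' θR' : ℂ)
    (hθ0 : θ0 ∈ S2pi) (hθR : θR ∈ S2pi) (hθ0' : θ0' ∈ S2pi) (hθR' : θR' ∈ S2pi)
    (z : ℂ) (hz : ¬ IsEigenvalue R V θ0 θR z) (hz' : ¬ IsEigenvalue R V θ0' θR' z) :
    IsUnit (lambdaMat R V θ0 θR θ0' θR' z) ∧
    (lambdaMat R V θ0 θR θ0' θR' z)⁻¹ = lambdaMat R V θ0' θR' θ0 θR z := by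
  have hML : lambdaMat R V θ0' θR' θ0 θR z * lambdaMat R V θ0 θR θ0' θR' z = 1 :=
    BDMaux.lambdaMat_mul hR hV hz hz'
  have hLM : lambdaMat R V θ0 θR θ0' θR' z * lambdaMat R V θ0' θR' θ0 θR z = 1 :=
    BDMaux.lambdaMat_mul hR hV hz' hz
  refine ⟨⟨⟨lambdaMat R V θ0 θR θ0' θR' z, lambdaMat R V θ0' θR' θ0 θR z, hLM, hML⟩, rfl⟩, ?_⟩
  exact Matrix.inv_eq_right_inv hLM
end

section
/- Let θ₀, θ_R, θ₀', θ_R' ∈ S_{2π} and z ∈ ℂ \ σ(H_{θ₀,θ_R}). Then cos(θ₀) + sin(θ₀)u'_{+,θ_R}(z,0) ≠ 0 and cos(θ_R) − sin(θ_R)u'_{−,θ₀}(z,R) ≠ 0, and the entries of the boundary data map are: (Λ_{θ₀,θ_R}^{θ₀',θ_R'}(z))_{1,1} = (cos(θ₀') + sin(θ₀')u'_{+,θ_R}(z,0))/(cos(θ₀) + sin(θ₀)u'_{+,θ_R}(z,0)); (Λ_{θ₀,θ_R}^{θ₀',θ_R'}(z))_{1,2} = (cos(θ₀')u_{−,θ₀}(z,0)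 + sin(θ₀')u'_{−,θ₀}(z,0))/(cos(θ_R) − sin(θ_R)u'_{−,θ₀}(z,R)); (Λ_{θ₀,θ_R}^{θ₀',θ_R'}(z))_{2,1} = (cos(θ_R')u_{+,θ_R}(z,R) − sin(θ_R')u'_{+,θ_R}(z,R))/(cos(θ₀) + sin(θ₀)u'_{+,θ_R}(z,0)); (Λ_{θ₀,θ_R}^{θ₀',θ_R'}(z))_{2,2} = (cos(θ_R') − sin(θ_R')u'_{−,θ₀}(z,R))/(cos(θ_R) − sin(θ_R)u'_{−,θ₀}(z,R)). -/
open MeasureTheory Set Complex Filter Matrix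
open scoped Classical

-- scaling lemma
theorem IsSol.const_mul {R : ℝ} {V : ℝ → ℂ} {z : ℂ} {u u' : ℝ → ℂ}
    (h : IsSol R V z u u') (c : ℂ) :
    IsSol R V z (fun x => c * u x) (fun x => c * u' x) := by
  constructor
  · intro x hx
    exact (h.1 x hx).const_mul c
  · intro x hx
    have h2 := h.2 x hx
    simp only [Pi.zero_apply, sub_zero] at h2 ⊢
    have : (∫ t in (0:ℝ)..x, (V t - z) * (c * u t)) =
        ∫ t in (0:ℝ)..x, c * ((V t - z) * u t) :=
      intervalIntegral.integral_congr (fun t _ => by ring)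
    rw [this, intervalIntegral.integral_const_mul, h2, mul_add]

-- difference of solutions with the same boundary trace vanishes at endpoints
theorem sol_unique {R : ℝ} (hR : 0 < R) {V : ℝ → ℂ}
    (hV : IntegrableOn V (Ioo 0 R)) {θ0 θR z : ℂ}
    (hz : ¬ IsEigenvalue R V θ0 θR z) {u1 u1' u2 u2' : ℝ → ℂ}
    (h1 : IsSol R V z u1 u1') (h2 : IsSol R V z u2 u2')
    (ht : bTrace R θ0 θR u1 u1' = bTrace R θ0 θR u2 u2') :
    u1 0 = u2 0 ∧ u1' 0 = u2' 0 ∧ u1 R = u2 R ∧ u1' R = u2' R := by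
  have h0R : (0:ℝ) ∈ Icc (0:ℝ) R := ⟨le_refl _, hR.le⟩
  have hRR : R ∈ Icc (0:ℝ) R := ⟨hR.le, le_refl _⟩
  have hVI : IntegrableOn V (Icc 0 R) := by
    rwa [IntegrableOn, Measure.restrict_congr_set Ioo_ae_eq_Icc] at hV
  have hVz : IntegrableOn (fun t => V t - z) (Icc 0 R) :=
    hVI.sub (integrableOn_const (by simp) (by simp))
  -- product integrability
  have key : ∀ (u : ℝ → ℂ), ContinuousOn u (Icc 0 R) → ∀ x ∈ Icc (0:ℝ) R,
      IntervalIntegrable (fun t => (V t - z) * u t) volume 0 x := by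
    intro u hu x hx
    rw [intervalIntegrable_iff_integrableOn_Ioc_of_le hx.1]
    have hsub : Ioc (0:ℝ) x ⊆ Icc 0 R := fun t ht => ⟨ht.1.le, ht.2.trans hx.2⟩
    obtain ⟨C, hC⟩ := isCompact_Icc.exists_bound_of_continuousOn hu
    have hVz' : IntegrableOn (fun t => V t - z) (Ioc 0 x) := hVz.mono_set hsub
    have hmeas : AEStronglyMeasurable (fun t => (V t - z) * u t)
        (volume.restrict (Ioc 0 x)) := by
      refine AEStronglyMeasurable.mul hVz'.1 ?_
      exact ((hu.mono hsub).aestronglyMeasurable measurableSet_Ioc)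
    refine Integrable.mono' (hVz'.norm.smul C) hmeas ?_
    filter_upwards [ae_restrict_mem measurableSet_Ioc] with t ht
    have := hC t (hsub ht)
    calc ‖(V t - z) * u t‖ = ‖V t - z‖ * ‖u t‖ := norm_mul _ _
      _ ≤ ‖V t - z‖ * C := by
          exact mul_le_mul_of_nonneg_left this (norm_nonneg _)
      _ = C • ‖V t - z‖ := by simp [mul_comm]
  have hc1 : ContinuousOn u1 (Icc 0 R) := fun x hx => (h1.1 x hx).continuousAt.continuousWithinAt
  have hc2 : ContinuousOn u2 (Icc 0 R) := fun x hx => (h2.1 x hx).continuousAt.continuousWithinAt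
  set w : ℝ → ℂ := fun x => u1 x - u2 x with hw
  set w' : ℝ → ℂ := fun x => u1' x - u2' x with hw'
  have hsol : IsSol R V z w w' := by
    constructor
    · intro x hx; exact (h1.1 x hx).sub (h2.1 x hx)
    · intro x hx
      have e1 := h1.2 x hx
      have e2 := h2.2 x hx
      simp only [Pi.zero_apply, sub_zero] at e1 e2 ⊢
      have hint : (∫ t in (0:ℝ)..x, (V t - z) * w t) =
          (∫ t in (0:ℝ)..x, (V t - z) * u1 t) - ∫ t in (0:ℝ)..x, (V t - z) * u2 t := by
        rw [← intervalIntegral.integral_sub (key u1 hc1 x hx) (key u2 hc2 x hx)]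
        exact intervalIntegral.integral_congr (fun t _ => by simp [hw]; ring)
      simp only [hw', hint, e1, e2]; ring
  have htr : bTrace R θ0 θR w w' = 0 := by
    have e0 := congrFun ht 0
    have e1 := congrFun ht 1
    simp only [bTrace, Matrix.cons_val_zero, Matrix.cons_val_one, Matrix.head_cons] at e0 e1
    funext i
    fin_cases i
    · show Complex.cos θ0 * w 0 + Complex.sin θ0 * w' 0 = 0
      show Complex.cos θ0 * (u1 0 - u2 0) + Complex.sin θ0 * (u1' 0 - u2' 0) = 0
      linear_combination e0
    · show Complex.cos θR * w R - Complex.sin θR * w' R = 0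
      show Complex.cos θR * (u1 R - u2 R) - Complex.sin θR * (u1' R - u2' R) = 0
      linear_combination e1
  have hw0 : ∀ x ∈ Icc (0:ℝ) R, w x = 0 := by
    by_contra h
    push_neg at h
    obtain ⟨x, hx, hxne⟩ := h
    exact hz ⟨w, w', hsol, htr, x, hx, hxne⟩
  have hderiv0 : ∀ x ∈ Icc (0:ℝ) R, w' x = 0 := by
    intro x hx
    have hd : HasDerivWithinAt w (w' x) (Icc 0 R) x := (hsol.1 x hx).hasDerivWithinAt
    have hd0 : HasDerivWithinAt w 0 (Icc 0 R) x := by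
      have hc : HasDerivWithinAt (fun _ : ℝ => (0:ℂ)) 0 (Icc 0 R) x :=
        (hasDerivAt_const x (0:ℂ)).hasDerivWithinAt
      exact hc.congr (fun y hy => hw0 y hy) (hw0 x hx)
    have hu := (uniqueDiffOn_Icc hR) x hx
    rw [← hd.derivWithin hu, hd0.derivWithin hu]
  have e0 := hw0 0 h0R
  have eR := hw0 R hRR
  have e0' := hderiv0 0 h0R
  have eR' := hderiv0 R hRR
  simp only [hw, hw', sub_eq_zero] at e0 eR e0' eR'
  exact ⟨e0, e0', eR, eR'⟩


theorem lambda_eq {R : ℝ} (hR : 0 < R) {V : ℝ → ℂ} (hV : IntegrableOn V (Ioo 0 R))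
    {θ0 θR : ℂ} (θ0' θR' : ℂ) {z : ℂ} (hz : ¬ IsEigenvalue R V θ0 θR z)
    {c : Fin 2 → ℂ} {u u' : ℝ → ℂ} (hsol : IsSol R V z u u')
    (htr : bTrace R θ0 θR u u' = c) :
    lambdaMap R V θ0 θR θ0' θR' z c = bTrace R θ0' θR' u u' := by
  have hex : ∃ p : (ℝ → ℂ) × (ℝ → ℂ), IsSol R V z p.1 p.2 ∧ bTrace R θ0 θR p.1 p.2 = c :=
    ⟨(u, u'), hsol, htr⟩
  rw [lambdaMap, dif_pos hex]
  obtain ⟨hs, ht2⟩ := hex.choose_spec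
  obtain ⟨a, b, cc, d⟩ := sol_unique hR hV hz hs hsol (ht2.trans htr.symm)
  funext i
  fin_cases i
  · show Complex.cos θ0' * hex.choose.1 0 + Complex.sin θ0' * hex.choose.2 0 =
      Complex.cos θ0' * u 0 + Complex.sin θ0' * u' 0
    rw [a, b]
  · show Complex.cos θR' * hex.choose.1 R - Complex.sin θR' * hex.choose.2 R =
      Complex.cos θR' * u R - Complex.sin θR' * u' R
    rw [cc, d]


/-- Let `θ₀, θ_R, θ₀', θ_R' ∈ S_{2π}`, `z ∈ ℂ \ σ(H_{θ₀,θ_R})`,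
and let `u₊ = u_{+,θ_R}(z,·)` and `u₋ = u_{−,θ₀}(z,·)` be the distinguished basis
of solutions of `-u'' + V u = z u` determined by `u₊(z,0) = 1`,
`cos θ_R u₊(z,R) − sin θ_R u₊'(z,R) = 0`, `u₋(z,R) = 1`,
`cos θ₀ u₋(z,0) + sin θ₀ u₋'(z,0) = 0`.  Then the denominators
`cos θ₀ + sin θ₀ u₊'(z,0)` and `cos θ_R − sin θ_R u₋'(z,R)` are nonzero and the
four entries of `Λ_{θ₀,θ_R}^{θ₀',θ_R'}(z)` are given by the displayed quotients. -/
theorem lambda_entries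
    (R : ℝ) (hR : 0 < R) (V : ℝ → ℂ) (hV : IntegrableOn V (Ioo 0 R))
    (θ0 θR θ0' θR' : ℂ)
    (hθ0 : θ0 ∈ S2pi) (hθR : θR ∈ S2pi) (hθ0' : θ0' ∈ S2pi) (hθR' : θR' ∈ S2pi)
    (z : ℂ) (hz : ¬ IsEigenvalue R V θ0 θR z)
    (up up' um um' : ℝ → ℂ)
    (hup : IsSol R V z up up') (hup0 : up 0 = 1)
    (hupR : Complex.cos θR * up R - Complex.sin θR * up' R = 0)
    (hum : IsSol R V z um um') (humR : um R = 1)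
    (hum0 : Complex.cos θ0 * um 0 + Complex.sin θ0 * um' 0 = 0) :
    Complex.cos θ0 + Complex.sin θ0 * up' 0 ≠ 0 ∧
    Complex.cos θR - Complex.sin θR * um' R ≠ 0 ∧
    lambdaMat R V θ0 θR θ0' θR' z 0 0 =
      (Complex.cos θ0' + Complex.sin θ0' * up' 0) /
        (Complex.cos θ0 + Complex.sin θ0 * up' 0) ∧
    lambdaMat R V θ0 θR θ0' θR' z 0 1 =
      (Complex.cos θ0' * um 0 + Complex.sin θ0' * um' 0) /
        (Complex.cos θR - Complex.sin θR * um' R) ∧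
    lambdaMat R V θ0 θR θ0' θR' z 1 0 =
      (Complex.cos θR' * up R - Complex.sin θR' * up' R) /
        (Complex.cos θ0 + Complex.sin θ0 * up' 0) ∧
    lambdaMat R V θ0 θR θ0' θR' z 1 1 =
      (Complex.cos θR' - Complex.sin θR' * um' R) /
        (Complex.cos θR - Complex.sin θR * um' R) := by
  set d0 : ℂ := Complex.cos θ0 + Complex.sin θ0 * up' 0 with hd0def
  set dR : ℂ := Complex.cos θR - Complex.sin θR * um' R with hdRdef
  have hd0 : d0 ≠ 0 := by
    intro h
    apply hz
    refine ⟨up, up', hup, ?_, 0, ⟨le_refl _, hR.le⟩, by rw [hup0]; exact one_ne_zero⟩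
    funext i
    fin_cases i
    · show Complex.cos θ0 * up 0 + Complex.sin θ0 * up' 0 = 0
      rw [hup0, mul_one]; exact h
    · show Complex.cos θR * up R - Complex.sin θR * up' R = 0
      exact hupR
  have hdR : dR ≠ 0 := by
    intro h
    apply hz
    refine ⟨um, um', hum, ?_, R, ⟨hR.le, le_refl _⟩, by rw [humR]; exact one_ne_zero⟩
    funext i
    fin_cases i
    · show Complex.cos θ0 * um 0 + Complex.sin θ0 * um' 0 = 0
      exact hum0
    · show Complex.cos θR * um R - Complex.sin θR * um' R = 0
      rw [humR, mul_one]; exact h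
  have hps0 : (Pi.single (0 : Fin 2) (1 : ℂ)) = ![1, 0] := by
    funext i; fin_cases i <;> simp
  have hps1 : (Pi.single (1 : Fin 2) (1 : ℂ)) = ![0, 1] := by
    funext i; fin_cases i <;> simp
  -- candidate solutions
  have hsolp : IsSol R V z (fun x => d0⁻¹ * up x) (fun x => d0⁻¹ * up' x) :=
    hup.const_mul d0⁻¹
  have hsolm : IsSol R V z (fun x => dR⁻¹ * um x) (fun x => dR⁻¹ * um' x) :=
    hum.const_mul dR⁻¹
  have htrp : bTrace R θ0 θR (fun x => d0⁻¹ * up x) (fun x => d0⁻¹ * up' x) =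
      Pi.single (0 : Fin 2) 1 := by
    rw [hps0]
    funext i
    fin_cases i
    · show Complex.cos θ0 * (d0⁻¹ * up 0) + Complex.sin θ0 * (d0⁻¹ * up' 0) = 1
      rw [hup0]
      have := inv_mul_cancel₀ hd0
      rw [hd0def] at this
      linear_combination this
    · show Complex.cos θR * (d0⁻¹ * up R) - Complex.sin θR * (d0⁻¹ * up' R) = 0
      linear_combination d0⁻¹ * hupR
  have htrm : bTrace R θ0 θR (fun x => dR⁻¹ * um x) (fun x => dR⁻¹ * um' x) =
      Pi.single (1 : Fin 2) 1 := by
    rw [hps1]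
    funext i
    fin_cases i
    · show Complex.cos θ0 * (dR⁻¹ * um 0) + Complex.sin θ0 * (dR⁻¹ * um' 0) = 0
      linear_combination dR⁻¹ * hum0
    · show Complex.cos θR * (dR⁻¹ * um R) - Complex.sin θR * (dR⁻¹ * um' R) = 1
      rw [humR]
      have := inv_mul_cancel₀ hdR
      rw [hdRdef] at this
      linear_combination this
  have hlp := lambda_eq hR hV θ0' θR' hz hsolp htrp
  have hlm := lambda_eq hR hV θ0' θR' hz hsolm htrm
  refine ⟨hd0, hdR, ?_, ?_, ?_, ?_⟩
  · show lambdaMap R V θ0 θR θ0' θR' z (Pi.single 0 1) 0 = _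
    rw [hlp]
    show Complex.cos θ0' * (d0⁻¹ * up 0) + Complex.sin θ0' * (d0⁻¹ * up' 0) = _
    rw [hup0, hd0def]
    ring
  · show lambdaMap R V θ0 θR θ0' θR' z (Pi.single 1 1) 0 = _
    rw [hlm]
    show Complex.cos θ0' * (dR⁻¹ * um 0) + Complex.sin θ0' * (dR⁻¹ * um' 0) = _
    rw [hdRdef]
    ring
  · show lambdaMap R V θ0 θR θ0' θR' z (Pi.single 0 1) 1 = _
    rw [hlp]
    show Complex.cos θR' * (d0⁻¹ * up R) - Complex.sin θR' * (d0⁻¹ * up' R) = _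
    rw [hd0def]
    ring
  · show lambdaMap R V θ0 θR θ0' θR' z (Pi.single 1 1) 1 = _
    rw [hlm]
    show Complex.cos θR' * (dR⁻¹ * um R) - Complex.sin θR' * (dR⁻¹ * um' R) = _
    rw [humR, hdRdef]
    ring
end

section
/- Let θ₀, θ_R ∈ S_{2π} and z ∈ ℂ \ σ(H_{θ₀,θ_R}). Then the Wronskian W(z) = W(u_{+,θ_R}(z,·), u_{−,θ₀}(z,·)) satisfies the two factorizations: [−sin(θ₀)u_{−,θ₀}(z,0) + cos(θ₀)u'_{−,θ₀}(z,0)]·[cos(θ₀) + sin(θ₀)u'_{+,θ_R}(z,0)] = W(z) = [cos(θ_R) − sin(θ_R)u'_{−,θ₀}(z,R)]·[−sin(θ_R)u_{+,θ_R}(z,R) − cos(θ_R)u'_{+,θ_R}(z,R)], and W(z) ≠ 0. -/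
open MeasureTheory Set Complex Filter Matrix
open scoped Classical

section AuxLemmas

open intervalIntegral Topology

lemma aux_contOn {R : ℝ} {u u' : ℝ → ℂ}
    (hu : ∀ x ∈ Icc (0:ℝ) R, HasDerivAt u (u' x) x) :
    ContinuousOn u (Icc (0:ℝ) R) :=
  fun x hx => (hu x hx).continuousAt.continuousWithinAt

lemma aux_g_integrable {R : ℝ} {V : ℝ → ℂ} {z : ℂ}
    (hV : IntegrableOn V (Ioo (0:ℝ) R)) {u : ℝ → ℂ}
    (hu : ContinuousOn u (Icc (0:ℝ) R)) :
    IntegrableOn (fun t => (V t - z) * u t) (Icc (0:ℝ) R) := by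
  rw [integrableOn_Icc_iff_integrableOn_Ioo]
  obtain ⟨C, hC⟩ := isCompact_Icc.exists_bound_of_continuousOn hu
  have hVz : IntegrableOn (fun t => V t - z) (Ioo (0:ℝ) R) :=
    hV.sub (integrableOn_const measure_Ioo_lt_top.ne)
  have hmeas : AEStronglyMeasurable u (volume.restrict (Ioo (0:ℝ) R)) :=
    (hu.mono Ioo_subset_Icc_self).aestronglyMeasurable measurableSet_Ioo
  have hbd : ∀ᵐ x ∂(volume.restrict (Ioo (0:ℝ) R)), ‖u x‖ ≤ C :=
    (ae_restrict_mem measurableSet_Ioo).mono fun x hx => hC x (Ioo_subset_Icc_self hx)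
  have := hVz.bdd_mul hmeas hbd
  simpa [mul_comm, IntegrableOn] using this

lemma aux_ibp {x : ℝ} (hx : 0 ≤ x) {u u' g : ℝ → ℂ}
    (hu : ∀ t ∈ Icc (0:ℝ) x, HasDerivAt u (u' t) t)
    (hu' : ContinuousOn u' (Icc (0:ℝ) x))
    (hg : IntegrableOn g (Icc (0:ℝ) x)) :
    ∫ t in (0:ℝ)..x, u t * g t
      = u x * (∫ t in (0:ℝ)..x, g t) - ∫ s in (0:ℝ)..x, u' s * (∫ t in (0:ℝ)..s, g t) := by
  have hgi : IntervalIntegrable g volume 0 x := by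
    rw [intervalIntegrable_iff_integrableOn_Icc_of_le hx]; exact hg
  have hsub : ∀ a b : ℝ, a ∈ Icc (0:ℝ) x → b ∈ Icc (0:ℝ) x → a ≤ b →
      IntervalIntegrable u' volume a b := fun a b ha hb hab =>
    (hu'.mono (by rw [uIcc_of_le hab]; exact Icc_subset_Icc ha.1 hb.2)).intervalIntegrable
  have hftc : ∀ t ∈ Icc (0:ℝ) x, u t = u x - ∫ s in t..x, u' s := by
    intro t ht
    have h1 : ∫ s in t..x, u' s = u x - u t :=
      integral_eq_sub_of_hasDerivAt (fun s hs => hu s (by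
        rw [uIcc_of_le ht.2] at hs; exact ⟨ht.1.trans hs.1, hs.2⟩))
        (hsub t x ht ⟨hx, le_rfl⟩ ht.2)
    rw [h1]; ring
  have hu'Icc : IntegrableOn u' (Icc (0:ℝ) x) := hu'.integrableOn_compact isCompact_Icc
  have hprimcont : ContinuousOn (fun t => ∫ s in t..x, u' s) (uIcc (0:ℝ) x) :=
    continuousOn_primitive_interval_left (by rwa [uIcc_of_le hx])
  have hint2 : IntervalIntegrable (fun t => (∫ s in t..x, u' s) * g t) volume 0 x :=
    hgi.continuousOn_mul hprimcont
  have h2 : ∫ t in (0:ℝ)..x, u t * g t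
      = u x * (∫ t in (0:ℝ)..x, g t) - ∫ t in (0:ℝ)..x, (∫ s in t..x, u' s) * g t := by
    have e : ∀ t ∈ uIcc (0:ℝ) x, u t * g t = u x * g t - (∫ s in t..x, u' s) * g t := by
      intro t ht
      rw [uIcc_of_le hx] at ht
      rw [hftc t ht]; ring
    rw [integral_congr e, integral_sub (hgi.const_mul _) hint2, intervalIntegral.integral_const_mul]
  rw [h2]
  congr 1
  set A : Set ℝ := Ioc (0:ℝ) x with hA
  have hAm : MeasurableSet A := measurableSet_Ioc
  set μ : Measure ℝ := volume.restrict A with hμ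
  have hgA : Integrable g μ := hg.mono_set Ioc_subset_Icc_self
  have hu'A : Integrable u' μ := hu'Icc.mono_set Ioc_subset_Icc_self
  set F : ℝ × ℝ → ℂ := {p : ℝ × ℝ | p.1 < p.2}.indicator (fun p => g p.1 * u' p.2) with hF
  have hFint : Integrable F (μ.prod μ) :=
    (hgA.mul_prod hu'A).indicator (measurableSet_lt measurable_fst measurable_snd)
  have hswap := MeasureTheory.integral_integral_swap (f := fun t s => F (t, s)) hFint
  have hleft : (∫ t, ∫ s, F (t, s) ∂μ ∂μ) = ∫ t in (0:ℝ)..x, (∫ s in t..x, u' s) * g t := by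
    rw [integral_of_le hx]
    refine (setIntegral_congr_fun hAm fun t ht => ?_).symm
    have e1 : (fun s => F (t, s)) = (Ioi t).indicator (fun s => g t * u' s) := by
      funext s
      simp only [hF, Set.indicator_apply, mem_setOf_eq, mem_Ioi]
    have hset : Ioi t ∩ A = Ioc t x := by
      rw [hA]; ext s
      simp only [mem_inter_iff, mem_Ioi, mem_Ioc]
      constructor
      · rintro ⟨h1, h2, h3⟩; exact ⟨h1, h3⟩
      · rintro ⟨h1, h2⟩; exact ⟨h1, ht.1.trans h1, h2⟩
    have hinner : ∫ s, F (t, s) ∂μ = ∫ s in Ioc t x, g t * u' s := by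
      rw [e1, MeasureTheory.integral_indicator measurableSet_Ioi, hμ,
        Measure.restrict_restrict measurableSet_Ioi, hset]
    rw [hinner, MeasureTheory.integral_const_mul, ← integral_of_le ht.2, mul_comm]
  have hright : (∫ s, ∫ t, F (t, s) ∂μ ∂μ) = ∫ s in (0:ℝ)..x, u' s * (∫ t in (0:ℝ)..s, g t) := by
    rw [integral_of_le hx]
    refine setIntegral_congr_fun hAm fun s hs => ?_
    have e1 : (fun t => F (t, s)) = (Iio s).indicator (fun t => g t * u' s) := by
      funext t
      simp only [hF, Set.indicator_apply, mem_setOf_eq, mem_Iio]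
    have hset : Iio s ∩ A = Ioo 0 s := by
      rw [hA]; ext t
      simp only [mem_inter_iff, mem_Iio, mem_Ioc, mem_Ioo]
      constructor
      · rintro ⟨h1, h2, h3⟩; exact ⟨h2, h1⟩
      · rintro ⟨h1, h2⟩; exact ⟨h2, h1, h2.le.trans hs.2⟩
    have hinner : ∫ t, F (t, s) ∂μ = ∫ t in Ioo 0 s, g t * u' s := by
      rw [e1, MeasureTheory.integral_indicator measurableSet_Iio, hμ,
        Measure.restrict_restrict measurableSet_Iio, hset]
    rw [hinner, MeasureTheory.integral_mul_const, ← integral_Ioc_eq_integral_Ioo,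
      ← integral_of_le hs.1.le, mul_comm]
  rw [← hleft, hswap, hright]


variable {R : ℝ} {V : ℝ → ℂ} {z : ℂ}

/-- Clean form of the second condition of `IsSol`. -/
lemma aux_sol2 {u u' : ℝ → ℂ} (hu : IsSol R V z u u') :
    ∀ x ∈ Icc (0:ℝ) R, u' x = u' 0 + ∫ t in (0:ℝ)..x, (V t - z) * u t := by
  intro x hx
  have := hu.2 x hx
  simpa using this

/-- The derivative `u'` of a solution is continuous on `[0,R]`. -/
lemma aux_sol_deriv_cont (hR : 0 ≤ R) (hV : IntegrableOn V (Ioo (0:ℝ) R))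
    {u u' : ℝ → ℂ} (hu : IsSol R V z u u') :
    ContinuousOn u' (Icc (0:ℝ) R) := by
  have hg : IntegrableOn (fun t => (V t - z) * u t) (Icc (0:ℝ) R) :=
    aux_g_integrable hV (aux_contOn hu.1)
  have hcont : ContinuousOn (fun x => u' 0 + ∫ t in (0:ℝ)..x, (V t - z) * u t)
      (Icc (0:ℝ) R) := by
    apply continuousOn_const.add
    have := intervalIntegral.continuousOn_primitive_interval
      (f := fun t => (V t - z) * u t) (a := (0:ℝ)) (b := R) (μ := volume)
      (by rwa [uIcc_of_le hR])
    rwa [uIcc_of_le hR] at this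
  exact hcont.congr (aux_sol2 hu)

lemma aux_prod (hR : 0 ≤ R) (hV : IntegrableOn V (Ioo (0:ℝ) R))
    {u u' v v' : ℝ → ℂ} (hu : IsSol R V z u u') (hv : IsSol R V z v v')
    {x : ℝ} (hx : x ∈ Icc (0:ℝ) R) :
    u x * v' x - u 0 * v' 0
      = ∫ t in (0:ℝ)..x, (u' t * v' t + u t * ((V t - z) * v t)) := by
  set gv : ℝ → ℂ := fun t => (V t - z) * v t with hgv
  have hgvI : IntegrableOn gv (Icc (0:ℝ) R) := aux_g_integrable hV (aux_contOn hv.1)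
  have hgvIx : IntegrableOn gv (Icc (0:ℝ) x) := hgvI.mono_set (Icc_subset_Icc le_rfl hx.2)
  have hux : ∀ t ∈ Icc (0:ℝ) x, HasDerivAt u (u' t) t :=
    fun t ht => hu.1 t ⟨ht.1, ht.2.trans hx.2⟩
  have hu'c : ContinuousOn u' (Icc (0:ℝ) x) :=
    (aux_sol_deriv_cont hR hV hu).mono (Icc_subset_Icc le_rfl hx.2)
  have hv'c : ContinuousOn v' (Icc (0:ℝ) R) := aux_sol_deriv_cont hR hV hv
  -- FTC for u
  have hftc : ∫ t in (0:ℝ)..x, u' t = u x - u 0 :=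
    integral_eq_sub_of_hasDerivAt
      (fun t ht => hux t (by rwa [uIcc_of_le hx.1] at ht))
      ((hu'c.mono (by rw [uIcc_of_le hx.1])).intervalIntegrable)
  have hibp := aux_ibp hx.1 hux hu'c hgvIx
  -- v' t = v' 0 + ∫₀ᵗ gv
  have hv2 := aux_sol2 hv
  -- interval integrabilities on [0,x]
  have hgvii : IntervalIntegrable gv volume 0 x := by
    rw [intervalIntegrable_iff_integrableOn_Icc_of_le hx.1]; exact hgvIx
  have hu'ii : IntervalIntegrable u' volume 0 x :=
    (hu'c.mono (by rw [uIcc_of_le hx.1])).intervalIntegrable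
  have huii : IntervalIntegrable (fun t => u t * gv t) volume 0 x := by
    rw [intervalIntegrable_iff_integrableOn_Icc_of_le hx.1]
    exact hgvIx.continuousOn_mul ((aux_contOn hu.1).mono (Icc_subset_Icc le_rfl hx.2))
      isCompact_Icc
  have hGvcont : ContinuousOn (fun s => ∫ t in (0:ℝ)..s, gv t) (Icc (0:ℝ) x) := by
    have := intervalIntegral.continuousOn_primitive_interval
      (f := gv) (a := (0:ℝ)) (b := x) (μ := volume) (by rwa [uIcc_of_le hx.1])
    rwa [uIcc_of_le hx.1] at this
  have hu'Gvii : IntervalIntegrable (fun s => u' s * (∫ t in (0:ℝ)..s, gv t)) volume 0 x := by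
    apply ContinuousOn.intervalIntegrable
    rw [uIcc_of_le hx.1]
    exact hu'c.mul hGvcont
  -- main computation
  have key : u x * v' x - u 0 * v' 0
      = v' 0 * (∫ t in (0:ℝ)..x, u' t) + ((∫ t in (0:ℝ)..x, u t * gv t)
          + ∫ s in (0:ℝ)..x, u' s * (∫ t in (0:ℝ)..s, gv t)) := by
    rw [hftc, hv2 x hx]
    have : u x * (∫ t in (0:ℝ)..x, gv t)
        = (∫ t in (0:ℝ)..x, u t * gv t) + ∫ s in (0:ℝ)..x, u' s * (∫ t in (0:ℝ)..s, gv t) := by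
      rw [hibp]; ring
    rw [mul_add, this]; ring
  rw [key, ← integral_add huii hu'Gvii, ← intervalIntegral.integral_const_mul,
    ← integral_add (hu'ii.const_mul (v' 0)) (huii.add hu'Gvii)]
  apply integral_congr
  intro t ht
  rw [uIcc_of_le hx.1] at ht
  have h3 : u' t * (∫ s in (0:ℝ)..t, gv s) = u' t * v' t - u' t * v' 0 := by
    rw [hv2 t ⟨ht.1, ht.2.trans hx.2⟩]; ring
  simp only
  rw [h3]
  simp only [hgv]
  ring

lemma aux_wronskii (hR : 0 ≤ R) (hV : IntegrableOn V (Ioo (0:ℝ) R))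
    {u u' v v' : ℝ → ℂ} (hu : IsSol R V z u u') (hv : IsSol R V z v v')
    {x : ℝ} (hx : x ∈ Icc (0:ℝ) R) :
    u x * v' x - u' x * v x = u 0 * v' 0 - u' 0 * v 0 := by
  have h1 := aux_prod hR hV hu hv hx
  have h2 := aux_prod hR hV hv hu hx
  have hii : ∀ (a b a' b' : ℝ → ℂ), IsSol R V z a a' → IsSol R V z b b' →
      IntervalIntegrable (fun t => a' t * b' t + a t * ((V t - z) * b t)) volume 0 x := by
    intro a b a' b' ha hb
    rw [intervalIntegrable_iff_integrableOn_Icc_of_le hx.1]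
    apply MeasureTheory.Integrable.add
    · apply ContinuousOn.integrableOn_compact isCompact_Icc
      exact ((aux_sol_deriv_cont hR hV ha).mono (Icc_subset_Icc le_rfl hx.2)).mul
        ((aux_sol_deriv_cont hR hV hb).mono (Icc_subset_Icc le_rfl hx.2))
    · exact ((aux_g_integrable hV (aux_contOn hb.1)).mono_set
        (Icc_subset_Icc le_rfl hx.2)).continuousOn_mul
        ((aux_contOn ha.1).mono (Icc_subset_Icc le_rfl hx.2)) isCompact_Icc
  have hzero : (∫ t in (0:ℝ)..x, ((u' t * v' t + u t * ((V t - z) * v t))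
      - (v' t * u' t + v t * ((V t - z) * u t)))) = 0 := by
    have he : EqOn (fun t => ((u' t * v' t + u t * ((V t - z) * v t))
        - (v' t * u' t + v t * ((V t - z) * u t)))) (fun _ => (0:ℂ)) (uIcc (0:ℝ) x) := by
      intro t _
      simp only
      ring
    rw [integral_congr he, intervalIntegral.integral_zero]
  have : u x * v' x - u 0 * v' 0 - (v x * u' x - v 0 * u' 0) = 0 := by
    rw [h1, h2, ← integral_sub (hii u v u' v' hu hv) (hii v u v' u' hv hu), hzero]
  linear_combination this

lemma aux_unique {R : ℝ} {V : ℝ → ℂ} {z : ℂ} (hR : 0 ≤ R)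
    (hV : IntegrableOn V (Ioo (0:ℝ) R))
    {v v' : ℝ → ℂ} (hv : IsSol R V z v v') (h0 : v 0 = 0) (h0' : v' 0 = 0) :
    ∀ x ∈ Icc (0:ℝ) R, v x = 0 := by
  have hvc : ContinuousOn v (Icc (0:ℝ) R) := aux_contOn hv.1
  have hv'c : ContinuousOn v' (Icc (0:ℝ) R) := aux_sol_deriv_cont hR hV hv
  have hgI : IntegrableOn (fun t => (V t - z) * v t) (Icc (0:ℝ) R) := aux_g_integrable hV hvc
  have hgii : ∀ a b : ℝ, a ∈ Icc (0:ℝ) R → b ∈ Icc (0:ℝ) R → a ≤ b →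
      IntervalIntegrable (fun t => (V t - z) * v t) volume a b := by
    intro a b ha hb hab
    rw [intervalIntegrable_iff_integrableOn_Icc_of_le hab]
    exact hgI.mono_set (Icc_subset_Icc ha.1 hb.2)
  have hhI : IntegrableOn (fun t => ‖V t - z‖) (Icc (0:ℝ) R) := by
    rw [integrableOn_Icc_iff_integrableOn_Ioo]
    exact (hV.sub (integrableOn_const measure_Ioo_lt_top.ne)).norm
  have hhii : ∀ a b : ℝ, a ∈ Icc (0:ℝ) R → b ∈ Icc (0:ℝ) R → a ≤ b →
      IntervalIntegrable (fun t => ‖V t - z‖) volume a b := by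
    intro a b ha hb hab
    rw [intervalIntegrable_iff_integrableOn_Icc_of_le hab]
    exact hhI.mono_set (Icc_subset_Icc ha.1 hb.2)
  set S : Set ℝ := {t | t ∈ Icc (0:ℝ) R ∧ ∀ s ∈ Icc (0:ℝ) t, v s = 0} with hS
  have hS0 : (0:ℝ) ∈ S := by
    refine ⟨⟨le_rfl, hR⟩, fun s hs => ?_⟩
    have hs0 : s = 0 := le_antisymm hs.2 hs.1
    rw [hs0]; exact h0
  have hSne : S.Nonempty := ⟨0, hS0⟩
  have hSbdd : BddAbove S := ⟨R, fun t ht => ht.1.2⟩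
  set T : ℝ := sSup S with hT
  have hT0 : 0 ≤ T := le_csSup hSbdd hS0
  have hTR : T ≤ R := csSup_le hSne fun t ht => ht.1.2
  have key1 : ∀ s, 0 ≤ s → s < T → v s = 0 := by
    intro s hs0 hsT
    obtain ⟨t, htS, hst⟩ := exists_lt_of_lt_csSup hSne hsT
    exact htS.2 s ⟨hs0, hst.le⟩
  have keyT : ∀ s ∈ Icc (0:ℝ) T, v s = 0 := by
    intro s hs
    rcases lt_or_eq_of_le hs.2 with hlt | heq
    · exact key1 s hs.1 hlt
    · rcases eq_or_lt_of_le hT0 with hT0' | hT0'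
      · rw [heq, ← hT0']; exact h0
      · rw [heq]
        have hcw : ContinuousWithinAt v (Ico 0 T) T :=
          (hvc T ⟨hT0, hTR⟩).mono (Ico_subset_Icc_self.trans (Icc_subset_Icc le_rfl hTR))
        have h1 : Tendsto v (𝓝[Ico (0:ℝ) T] T) (𝓝 (v T)) := hcw.tendsto
        have h2 : Tendsto v (𝓝[Ico (0:ℝ) T] T) (𝓝 0) := by
          apply Tendsto.congr' _ tendsto_const_nhds
          filter_upwards [self_mem_nhdsWithin] with s' hs'
          exact (key1 s' hs'.1 hs'.2).symm
        have hne : (𝓝[Ico (0:ℝ) T] T).NeBot := by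
          apply mem_closure_iff_nhdsWithin_neBot.1
          rw [closure_Ico (ne_of_lt hT0')]
          exact ⟨hT0, le_rfl⟩
        exact tendsto_nhds_unique h1 h2
  have hvT' : v' T = 0 := by
    rw [aux_sol2 hv T ⟨hT0, hTR⟩, h0', zero_add]
    have he : EqOn (fun t => (V t - z) * v t) (fun _ => (0:ℂ)) (uIcc (0:ℝ) T) := by
      intro t ht
      rw [uIcc_of_le hT0] at ht
      simp only
      rw [keyT t ht, mul_zero]
    rw [integral_congr he, intervalIntegral.integral_zero]
  have hTeqR : T = R := by
    by_contra hne
    have hTltR : T < R := lt_of_le_of_ne hTR hne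
    have hFcont : ContinuousOn (fun y => ∫ t in T..y, ‖V t - z‖) (Icc T R) := by
      have := intervalIntegral.continuousOn_primitive_interval
        (f := fun t => ‖V t - z‖) (a := T) (b := R) (μ := volume)
        (by rw [uIcc_of_le hTR]; exact hhI.mono_set (Icc_subset_Icc hT0 le_rfl))
      rwa [uIcc_of_le hTR] at this
    have hT0R : T ∈ Icc T R := ⟨le_rfl, hTR⟩
    have htends : Tendsto (fun y => ∫ t in T..y, ‖V t - z‖) (𝓝[Icc T R] T) (𝓝 0) := by
      have := (hFcont T hT0R).tendsto
      simpa using this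
    have hev1 : ∀ᶠ y in 𝓝[Icc T R] T, (∫ t in T..y, ‖V t - z‖) < 1/2 := by
      have := htends (Iio_mem_nhds (by norm_num : (0:ℝ) < 1/2))
      exact eventually_of_mem this fun y hy => hy
    have hev2 : ∀ᶠ y in 𝓝[Icc T R] T, y < T + 1 := by
      have : Iio (T+1) ∈ 𝓝[Icc T R] T :=
        nhdsWithin_le_nhds (Iio_mem_nhds (by linarith))
      exact eventually_of_mem this fun y hy => hy
    have hmono : 𝓝[Ioc T R] T ≤ 𝓝[Icc T R] T := nhdsWithin_mono T Ioc_subset_Icc_self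
    have hne2 : (𝓝[Ioc T R] T).NeBot := by
      apply mem_closure_iff_nhdsWithin_neBot.1
      rw [closure_Ioc (ne_of_lt hTltR)]
      exact ⟨le_rfl, hTR⟩
    have hev3 : ∀ᶠ y in 𝓝[Ioc T R] T,
        ((∫ t in T..y, ‖V t - z‖) < 1/2 ∧ y < T + 1) ∧ y ∈ Ioc T R :=
      ((hev1.filter_mono hmono).and (hev2.filter_mono hmono)).and eventually_mem_nhdsWithin
    obtain ⟨y, ⟨hyF, hy1⟩, hyIoc⟩ := hev3.exists
    have hTy : T ≤ y := hyIoc.1.le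
    have hyR : y ≤ R := hyIoc.2
    have hIsub : Icc T y ⊆ Icc (0:ℝ) R := Icc_subset_Icc hT0 hyR
    obtain ⟨x₀, hx₀, hmax⟩ := isCompact_Icc.exists_isMaxOn (nonempty_Icc.2 hTy)
      ((hvc.mono hIsub).norm)
    set M : ℝ := ‖v x₀‖ with hM
    have hM0 : 0 ≤ M := norm_nonneg _
    set η : ℝ := ∫ t in T..y, ‖V t - z‖ with hη
    have hη0 : 0 ≤ η := by
      rw [hη]
      exact intervalIntegral.integral_nonneg hTy fun t _ => norm_nonneg _
    have hbound' : ∀ x ∈ Icc T y, ‖v' x‖ ≤ M * η := by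
      intro x hxm
      have hx0R : x ∈ Icc (0:ℝ) R := hIsub hxm
      have e1 : v' x = ∫ t in T..x, (V t - z) * v t := by
        have hx2 := aux_sol2 hv x hx0R
        have hT2 := aux_sol2 hv T ⟨hT0, hTR⟩
        have hadd := integral_add_adjacent_intervals
          (hgii 0 T ⟨le_rfl, hR⟩ ⟨hT0, hTR⟩ hT0) (hgii T x ⟨hT0, hTR⟩ hx0R hxm.1)
        have e2 : v' x = v' T + ∫ t in T..x, (V t - z) * v t := by
          rw [hx2, hT2, ← hadd]; ring
        rw [e2, hvT', zero_add]
      have hnormii : IntervalIntegrable (fun t => ‖(V t - z) * v t‖) volume T x :=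
        (hgii T x ⟨hT0, hTR⟩ hx0R hxm.1).norm
      have hhM : IntervalIntegrable (fun t => ‖V t - z‖ * M) volume T x :=
        (hhii T x ⟨hT0, hTR⟩ hx0R hxm.1).mul_const M
      calc ‖v' x‖ = ‖∫ t in T..x, (V t - z) * v t‖ := by rw [e1]
        _ ≤ ∫ t in T..x, ‖(V t - z) * v t‖ :=
            intervalIntegral.norm_integral_le_integral_norm hxm.1
        _ ≤ ∫ t in T..x, ‖V t - z‖ * M := by
            apply integral_mono_on hxm.1 hnormii hhM
            intro t ht
            rw [norm_mul]
            exact mul_le_mul_of_nonneg_left (hmax ⟨ht.1, ht.2.trans hxm.2⟩) (norm_nonneg _)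
        _ = (∫ t in T..x, ‖V t - z‖) * M := intervalIntegral.integral_mul_const M _
        _ ≤ η * M := by
            apply mul_le_mul_of_nonneg_right _ hM0
            rw [hη]
            apply integral_mono_interval le_rfl hxm.1 hxm.2
            · exact (ae_restrict_mem measurableSet_Ioc).mono fun t _ => norm_nonneg _
            · exact hhii T y ⟨hT0, hTR⟩ ⟨hT0.trans hTy, hyR⟩ hTy
        _ = M * η := mul_comm _ _
    have hvx : ∀ x ∈ Icc T y, ‖v x‖ ≤ M * (1/2) := by
      intro x hxm
      have hx0R : x ∈ Icc (0:ℝ) R := hIsub hxm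
      have hftc : ∫ t in T..x, v' t = v x - v T := by
        apply integral_eq_sub_of_hasDerivAt
        · intro t ht
          rw [uIcc_of_le hxm.1] at ht
          exact hv.1 t ⟨hT0.trans ht.1, ht.2.trans hx0R.2⟩
        · apply ContinuousOn.intervalIntegrable
          rw [uIcc_of_le hxm.1]
          exact hv'c.mono fun t ht => ⟨hT0.trans ht.1, ht.2.trans hx0R.2⟩
      have hvT0 : v T = 0 := keyT T ⟨hT0, le_rfl⟩
      have e3 : v x = ∫ t in T..x, v' t := by rw [hftc, hvT0, sub_zero]
      have hv'ii : IntervalIntegrable (fun t => ‖v' t‖) volume T x := by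
        apply ContinuousOn.intervalIntegrable
        rw [uIcc_of_le hxm.1]
        exact (hv'c.mono fun t ht => ⟨hT0.trans ht.1, ht.2.trans hx0R.2⟩).norm
      calc ‖v x‖ = ‖∫ t in T..x, v' t‖ := by rw [e3]
        _ ≤ ∫ t in T..x, ‖v' t‖ := intervalIntegral.norm_integral_le_integral_norm hxm.1
        _ ≤ ∫ _t in T..x, M * η := by
            apply integral_mono_on hxm.1 hv'ii (intervalIntegrable_const)
            intro t ht
            exact hbound' t ⟨ht.1, ht.2.trans hxm.2⟩
        _ = (x - T) * (M * η) := by rw [intervalIntegral.integral_const, smul_eq_mul]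
        _ ≤ M * (1/2) := by
            have hx1 : x - T ≤ 1 := by
              have := hxm.2
              linarith
            have hxT : 0 ≤ x - T := by linarith [hxm.1]
            have hη12 : η ≤ 1/2 := le_of_lt hyF
            nlinarith [mul_nonneg hM0 hη0, mul_le_mul_of_nonneg_right hx1 (mul_nonneg hM0 hη0),
              mul_le_mul_of_nonneg_left hη12 hM0]
    have hMz : M = 0 := by
      have := hvx x₀ hx₀
      rw [← hM] at this
      nlinarith
    have hyS : y ∈ S := by
      refine ⟨⟨hT0.trans hTy, hyR⟩, fun s hs => ?_⟩
      rcases le_total s T with h' | h'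
      · exact keyT s ⟨hs.1, h'⟩
      · have hb := hvx s ⟨h', hs.2⟩
        rw [hMz] at hb
        have h1 : ‖v s‖ ≤ 0 := by linarith
        exact norm_le_zero_iff.1 h1
    have : y ≤ T := le_csSup hSbdd hyS
    exact absurd this (not_le.2 hyIoc.1)
  intro x hx
  exact keyT x (by rw [hTeqR]; exact hx)

end AuxLemmas

/-- Let `θ₀, θ_R ∈ S_{2π}`, `z ∈ ℂ \ σ(H_{θ₀,θ_R})`, and let
`u₊ = u_{+,θ_R}(z,·)`, `u₋ = u_{−,θ₀}(z,·)` be the distinguished solutions.  The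
Wronskian `W(z) = W(u₊,u₋) = u₊ u₋' − u₊' u₋` (which is constant on `[0,R]`)
admits the two factorizations
`[−sin θ₀ u₋(0) + cos θ₀ u₋'(0)]·[cos θ₀ + sin θ₀ u₊'(0)] = W(z)
 = [cos θ_R − sin θ_R u₋'(R)]·[−sin θ_R u₊(R) − cos θ_R u₊'(R)]`,
and `W(z) ≠ 0`. -/

theorem wronskian_factorizations
    (R : ℝ) (hR : 0 < R) (V : ℝ → ℂ) (hV : IntegrableOn V (Ioo 0 R))
    (θ0 θR : ℂ) (hθ0 : θ0 ∈ S2pi) (hθR : θR ∈ S2pi)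
    (z : ℂ) (hz : ¬ IsEigenvalue R V θ0 θR z)
    (up up' um um' : ℝ → ℂ)
    (hup : IsSol R V z up up') (hup0 : up 0 = 1)
    (hupR : Complex.cos θR * up R - Complex.sin θR * up' R = 0)
    (hum : IsSol R V z um um') (humR : um R = 1)
    (hum0 : Complex.cos θ0 * um 0 + Complex.sin θ0 * um' 0 = 0) :
    (-Complex.sin θ0 * um 0 + Complex.cos θ0 * um' 0) *
        (Complex.cos θ0 + Complex.sin θ0 * up' 0) =
      up 0 * um' 0 - up' 0 * um 0 ∧
    up 0 * um' 0 - up' 0 * um 0 = up R * um' R - up' R * um R ∧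
    (Complex.cos θR - Complex.sin θR * um' R) *
        (-Complex.sin θR * up R - Complex.cos θR * up' R) =
      up R * um' R - up' R * um R ∧
    up 0 * um' 0 - up' 0 * um 0 ≠ 0 := by
  have hsc0 : Complex.sin θ0 ^ 2 + Complex.cos θ0 ^ 2 = 1 := Complex.sin_sq_add_cos_sq θ0
  have hscR : Complex.sin θR ^ 2 + Complex.cos θR ^ 2 = 1 := Complex.sin_sq_add_cos_sq θR
  have hfac0 : (-Complex.sin θ0 * um 0 + Complex.cos θ0 * um' 0) *
      (Complex.cos θ0 + Complex.sin θ0 * up' 0) =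
      up 0 * um' 0 - up' 0 * um 0 := by
    rw [hup0]
    linear_combination (-Complex.sin θ0 + Complex.cos θ0 * up' 0) * hum0 +
      (um' 0 - um 0 * up' 0) * hsc0
  have hW : up 0 * um' 0 - up' 0 * um 0 = up R * um' R - up' R * um R :=
    (aux_wronskii hR.le hV hup hum (right_mem_Icc.2 hR.le)).symm
  have hfacR : (Complex.cos θR - Complex.sin θR * um' R) *
      (-Complex.sin θR * up R - Complex.cos θR * up' R) =
      up R * um' R - up' R * um R := by
    rw [humR]
    linear_combination (-Complex.sin θR - Complex.cos θR * um' R) * hupR +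
      (um' R * up R - up' R) * hscR
  refine ⟨hfac0, hW, hfacR, ?_⟩
  intro hW0
  by_cases hB : Complex.cos θ0 + Complex.sin θ0 * up' 0 = 0
  · apply hz
    have hb0 : Complex.cos θ0 * up 0 + Complex.sin θ0 * up' 0 = 0 := by
      rw [hup0, mul_one]; exact hB
    refine ⟨up, up', hup, ?_, 0, ⟨le_rfl, hR.le⟩, by rw [hup0]; exact one_ne_zero⟩
    funext i
    fin_cases i
    · simpa [bTrace] using hb0
    · simpa [bTrace] using hupR
  · have hA : -Complex.sin θ0 * um 0 + Complex.cos θ0 * um' 0 = 0 := by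
      rcases mul_eq_zero.1 (hfac0.trans hW0) with h | h
      · exact h
      · exact absurd h hB
    have hum00 : um 0 = 0 := by
      linear_combination Complex.cos θ0 * hum0 - Complex.sin θ0 * hA - um 0 * hsc0
    have hum00' : um' 0 = 0 := by
      linear_combination Complex.sin θ0 * hum0 + Complex.cos θ0 * hA - um' 0 * hsc0
    have hzero := aux_unique hR.le hV hum hum00 hum00' R (right_mem_Icc.2 hR.le)
    rw [humR] at hzero
    exact one_ne_zero hzero
end
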